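/- arXiv:2107.03494 — 6 statements merged into one kernel-verified Lean document; each statement's English description precedes it below -/
import Mathlib

section
/- Let d ≥ 2, D = C(d,2). Let g: [0,∞) → ℝ be concave and increasing, differentiable on (0,∞) with finite right derivative g'(0+) at 0. For any b, β ∈ ℝ^D, let λ ∈ ℝ^d be the eigenvalues of ℒ(|b|), let V ∈ ℝ^{d×d} be any orthogonal matrix whose k-th column is an eigenvector of ℒ(|b|) with eigenvalue λ_k, and let w ∈ ℝ^d be given by w_k = g'(λ_k) (using g'(0+) when λ_k = 0). Then the linearized-majorization inequality holds: Σ_{j=1}^d g(λ_j(ℒ(|β|))) ≤ Σ_{j=1}^d g(λ_j(ℒ(|b|))) + Σ_{(ij)} ℳ(V, w)_{(ij)} · (|β_{(ij)}| − |b_{(ij)}|); in particular, the weighted-ℓ1 surrogate Q(β | b) := ½ ℳ(V, w)ᵀ|β| + constants(b) majorizes the folded concave Laplacian spectral penalty ½ Σ_j g(λ_j(ℒ(|β|))) with equality at β = b. -/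
open scoped BigOperators
open Matrix

namespace FCLS

/-- Edge index: pairs `(i, j)` with `i < j`. -/
abbrev EdgeIdx (d : ℕ) := {p : Fin d × Fin d // p.1 < p.2}

/-- Hollow symmetric adjacency matrix attached to an edge vector. -/
def adjM {d : ℕ} (x : EdgeIdx d → ℝ) : Matrix (Fin d) (Fin d) ℝ :=
  Matrix.of fun i j =>
    if h : i < j then x ⟨(i, j), h⟩ else if h' : j < i then x ⟨(j, i), h'⟩ else 0

/-- Graph Laplacian of a square matrix. -/
def lapM {n : Type*} [Fintype n] [DecidableEq n] (A : Matrix n n ℝ) : Matrix n n ℝ :=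
  Matrix.diagonal (fun i => ∑ j, A i j) - A

/-- Graph Laplacian of an edge vector. -/
def lap {d : ℕ} (x : EdgeIdx d → ℝ) : Matrix (Fin d) (Fin d) ℝ := lapM (adjM x)

/-- Eigenvalues sorted in nondecreasing order (`0` when not Hermitian). -/
noncomputable def eigs {n : Type*} [Fintype n] [DecidableEq n] (A : Matrix n n ℝ) :
    Fin (Fintype.card n) → ℝ :=
  if hA : A.IsHermitian then
    (fun v : Fin (Fintype.card n) → ℝ => v ∘ Tuple.sort v)
      (hA.eigenvalues ∘ (Fintype.equivFin n).symm)
  else 0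

/-- `j`-th smallest eigenvalue, `1`-indexed. -/
noncomputable def eigAsc {n : Type*} [Fintype n] [DecidableEq n] (A : Matrix n n ℝ) (j : ℕ) : ℝ :=
  if h : j - 1 < Fintype.card n then eigs A ⟨j - 1, h⟩ else 0

/-- Laplacian coefficient `ℳ(V, w)`. -/
def lapCoeff {d K : ℕ} (V : Matrix (Fin d) (Fin K) ℝ) (w : Fin K → ℝ) : EdgeIdx d → ℝ :=
  fun e => ∑ k, w k * (V e.1.1 k - V e.1.2 k) ^ 2

/-- Support graph of an edge vector. -/
def suppGraph {d : ℕ} (x : EdgeIdx d → ℝ) : SimpleGraph (Fin d) :=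
  SimpleGraph.fromRel fun i j => ∃ h : i < j, x ⟨(i, j), h⟩ ≠ 0

/-- Support graph of a square matrix. -/
def suppGraphM {d : ℕ} (A : Matrix (Fin d) (Fin d) ℝ) : SimpleGraph (Fin d) :=
  SimpleGraph.fromRel fun i j => A i j ≠ 0

/-- Block support: edges whose endpoints lie in a common connected component
of the support graph. -/
def blockSupp {d : ℕ} (x : EdgeIdx d → ℝ) : Set (EdgeIdx d) :=
  {e | (suppGraph x).Reachable e.1.1 e.1.2}

/-- Number of vertices in the connected component of `i`. -/
noncomputable def compCard {d : ℕ} (G : SimpleGraph (Fin d)) (i : Fin d) : ℕ :=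
  Nat.card {j : Fin d // G.Reachable i j}

/-- Largest connected-component size. -/
noncomputable def maxCompCard {d : ℕ} (G : SimpleGraph (Fin d)) : ℕ :=
  Finset.univ.sup fun i => compCard G i

/-- Number of connected components. -/
noncomputable def numComp {d : ℕ} (G : SimpleGraph (Fin d)) : ℕ :=
  Nat.card G.ConnectedComponent

open Classical in
/-- Restriction of an edge vector to edges inside a vertex set. -/
noncomputable def restrictE {d : ℕ} (x : EdgeIdx d → ℝ) (S : Set (Fin d)) : EdgeIdx d → ℝ :=
  fun e => if e.1.1 ∈ S ∧ e.1.2 ∈ S then x e else 0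

/-- `j`-th smallest eigenvalue (1-indexed) of the Laplacian of the adjacency
submatrix on the vertex set `S`. -/
noncomputable def subLapEig {d : ℕ} (x : EdgeIdx d → ℝ) (S : Set (Fin d)) (j : ℕ) : ℝ :=
  letI : Fintype S := Fintype.ofFinite S
  eigAsc (lapM ((adjM x).submatrix (fun a : S => (a : Fin d)) fun a : S => (a : Fin d))) j

/-- Spectral (`ℓ2 → ℓ2` operator) norm of a matrix. -/
noncomputable def opNorm {m n : Type*} [Fintype m] [Fintype n] [DecidableEq n]
    (A : Matrix m n ℝ) : ℝ :=
  ‖LinearMap.toContinuousLinearMap (Matrix.toEuclideanLin A)‖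

/-- Entrywise `ℓ1` norm of a matrix. -/
noncomputable def matL1 {m n : Type*} [Fintype m] [Fintype n] (A : Matrix m n ℝ) : ℝ :=
  ∑ i, ∑ j, |A i j|

/-- Frobenius norm of a matrix. -/
noncomputable def frob {m n : Type*} [Fintype m] [Fintype n] (A : Matrix m n ℝ) : ℝ :=
  Real.sqrt (∑ i, ∑ j, A i j ^ 2)

/-- `ℓ1 → ℓ1` operator norm: maximal absolute row sum. -/
noncomputable def opOne {m n : Type*} [Fintype m] [Fintype n] (A : Matrix m n ℝ) : ℝ :=
  ⨆ i, ∑ j, |A i j|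

/-- `ℓ2 → ℓ∞` operator norm: maximal Euclidean row norm. -/
noncomputable def twoInf {m n : Type*} [Fintype m] [Fintype n] (A : Matrix m n ℝ) : ℝ :=
  ⨆ i, Real.sqrt (∑ j, A i j ^ 2)

/-- Max (absolute) entry of a vector. -/
noncomputable def vecMax {ι : Type*} [Fintype ι] (v : ι → ℝ) : ℝ := ⨆ i, |v i|

/-- `ℓ1` norm of a vector. -/
noncomputable def l1 {ι : Type*} [Fintype ι] (v : ι → ℝ) : ℝ := ∑ i, |v i|

/-- `ℓ2` norm of a vector. -/
noncomputable def l2 {ι : Type*} [Fintype ι] (v : ι → ℝ) : ℝ := Real.sqrt (∑ i, v i ^ 2)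

/-- SCAD-like folded concave penalty `g` with (within-domain) derivative `g'`. -/
structure SCADLike (g g' : ℝ → ℝ) (a0 a1 b1 b2 τ : ℝ) : Prop where
  a1_le_a0 : a1 ≤ a0
  a1_pos : 0 < a1
  b1_pos : 0 < b1
  b1_lt_b2 : b1 < b2
  map_zero : g 0 = 0
  mono : MonotoneOn g (Set.Ici 0)
  concave : ConcaveOn ℝ (Set.Ici 0) g
  hasDeriv : ∀ t ∈ Set.Ici (0 : ℝ), HasDerivWithinAt g (g' t) (Set.Ici 0) t
  deriv_zero : g' 0 = a0 * τ
  deriv_low : ∀ t : ℝ, 0 < t → t ≤ b1 * τ → a1 * τ ≤ g' t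
  deriv_high : ∀ t : ℝ, b2 * τ ≤ t → g' t = 0

/-- `(V, lam)` is an orthonormal eigendecomposition of `A`. -/
def IsEigenDecomp {d : ℕ} (A V : Matrix (Fin d) (Fin d) ℝ) (lam : Fin d → ℝ) : Prop :=
  Vᵀ * V = 1 ∧ ∀ k, A *ᵥ (fun i => V i k) = lam k • fun i => V i k

/-- LLA surrogate objective with weight vector `M`. -/
noncomputable def llaObj {d : ℕ} (ℓ : (EdgeIdx d → ℝ) → ℝ) (M β : EdgeIdx d → ℝ) : ℝ :=
  ℓ β + (1 / 2) * ∑ e, M e * |β e|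

/-- `out` is the output of one LLA step from `b` (for some orthonormal
eigendecomposition of `ℒ(|b|)`). -/
def LLAStep {d : ℕ} (ℓ : (EdgeIdx d → ℝ) → ℝ) (g' : ℝ → ℝ) (b out : EdgeIdx d → ℝ) : Prop :=
  ∃ V lam, IsEigenDecomp (lap fun e => |b e|) V lam ∧
    ∀ β, llaObj ℓ (lapCoeff V fun k => g' (lam k)) out ≤
      llaObj ℓ (lapCoeff V fun k => g' (lam k)) β

/-- `β` solves the weighted Lasso block-oracle problem with weights `w`. -/
def OrcLassoSol {d : ℕ} (ℓ : (EdgeIdx d → ℝ) → ℝ) (S : Set (EdgeIdx d))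
    (w β : EdgeIdx d → ℝ) : Prop :=
  (∀ e ∉ S, β e = 0) ∧
  ∀ γ : EdgeIdx d → ℝ, (∀ e ∉ S, γ e = 0) →
    ℓ β + (1 / 2) * ∑ e, w e * |β e| ≤ ℓ γ + (1 / 2) * ∑ e, w e * |γ e|

/-- The set `T_op(ρ, τ)` of weighted-Lasso-oracle solutions with small weights. -/
def TopSet {d : ℕ} (ℓ : (EdgeIdx d → ℝ) → ℝ) (S : Set (EdgeIdx d))
    (a0 τ ρ : ℝ) : Set (EdgeIdx d → ℝ) :=
  {β | ∃ w : EdgeIdx d → ℝ, (∀ e, 0 ≤ w e) ∧ (∀ e ∉ S, w e = 0) ∧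
      (∀ e, w e ≤ 2 ^ 5 * a0 * τ * ρ ^ 2) ∧ OrcLassoSol ℓ S w β}


lemma adjM_symm {d : ℕ} (x : EdgeIdx d → ℝ) (i j : Fin d) : adjM x j i = adjM x i j := by
  unfold adjM
  rcases lt_trichotomy i j with h | h | h
  · simp [of_apply, dif_pos h, dif_neg (lt_asymm h)]
  · simp [h]
  · simp [of_apply, dif_pos h, dif_neg (lt_asymm h)]

lemma adjM_diag {d : ℕ} (x : EdgeIdx d → ℝ) (i : Fin d) : adjM x i i = 0 := by
  simp [adjM]

lemma adjM_edge {d : ℕ} (x : EdgeIdx d → ℝ) (e : EdgeIdx d) : adjM x e.1.1 e.1.2 = x e := by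
  simp [adjM, dif_pos e.2]

/-- Sum over edges of a symmetric, hollow kernel equals half the full double sum. -/

lemma sum_edge {d : ℕ} (f : Fin d → Fin d → ℝ) (hsymm : ∀ i j, f j i = f i j)
    (hdiag : ∀ i, f i i = 0) :
    ∑ e : EdgeIdx d, f e.1.1 e.1.2 = (1/2) * ∑ i, ∑ j, f i j := by
  classical
  have h1 : ∑ e : EdgeIdx d, f e.1.1 e.1.2
      = ∑ p ∈ Finset.univ.filter (fun p : Fin d × Fin d => p.1 < p.2), f p.1 p.2 :=
    (Finset.sum_subtype _ (by simp) (fun p : Fin d × Fin d => f p.1 p.2)).symm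
  have hfull : ∑ i, ∑ j, f i j = ∑ p : Fin d × Fin d, f p.1 p.2 :=
    (Fintype.sum_prod_type (f := fun p : Fin d × Fin d => f p.1 p.2)).symm
  have hsplit := Finset.sum_filter_add_sum_filter_not Finset.univ
    (fun p : Fin d × Fin d => p.1 < p.2) (fun p => f p.1 p.2)
  have hsplit2 := Finset.sum_filter_add_sum_filter_not
    (Finset.univ.filter (fun p : Fin d × Fin d => ¬ p.1 < p.2))
    (fun p : Fin d × Fin d => p.2 < p.1) (fun p => f p.1 p.2)
  have hz : ∑ p ∈ (Finset.univ.filter (fun p : Fin d × Fin d => ¬ p.1 < p.2)).filter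
      (fun p : Fin d × Fin d => ¬ p.2 < p.1), f p.1 p.2 = 0 := by
    refine Finset.sum_eq_zero ?_
    intro p hp
    simp only [Finset.mem_filter, Finset.mem_univ, true_and, not_lt] at hp
    have : p.1 = p.2 := le_antisymm hp.2 hp.1
    rw [← this, hdiag]
  have hgt : (Finset.univ.filter (fun p : Fin d × Fin d => ¬ p.1 < p.2)).filter
      (fun p : Fin d × Fin d => p.2 < p.1)
      = Finset.univ.filter (fun p : Fin d × Fin d => p.2 < p.1) := by
    rw [Finset.filter_filter]
    congr 1
    ext p
    constructor
    · exact fun h => h.2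
    · exact fun h => ⟨lt_asymm h, h⟩
  have h2 : ∑ p ∈ Finset.univ.filter (fun p : Fin d × Fin d => p.2 < p.1), f p.1 p.2
      = ∑ p ∈ Finset.univ.filter (fun p : Fin d × Fin d => p.1 < p.2), f p.1 p.2 := by
    refine Finset.sum_nbij' (fun p => Prod.swap p) (fun p => Prod.swap p) ?_ ?_ ?_ ?_ ?_
    · intro p hp; simpa using (by simpa using hp : p.2 < p.1)
    · intro p hp; simpa using (by simpa using hp : p.1 < p.2)
    · intro p _; exact Prod.swap_swap p
    · intro p _; exact Prod.swap_swap p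
    · intro p hp; exact (hsymm p.1 p.2).symm
  rw [h1, hfull, ← hsplit, ← hsplit2, hz, hgt, h2]
  ring

lemma dot_mulVec_expand {d : ℕ} (M : Matrix (Fin d) (Fin d) ℝ) (u : Fin d → ℝ) :
    u ⬝ᵥ (M *ᵥ u) = ∑ i, ∑ j, M i j * u i * u j := by
  simp only [dotProduct, mulVec, Finset.mul_sum]
  congr 1; funext i; congr 1; funext j; ring

lemma quadForm {d : ℕ} (x : EdgeIdx d → ℝ) (u : Fin d → ℝ) :
    u ⬝ᵥ (lap x *ᵥ u) = ∑ e : EdgeIdx d, x e * (u e.1.1 - u e.1.2)^2 := by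
  classical
  have hswap : ∑ i, ∑ j, adjM x i j * u j ^ 2 = ∑ i, ∑ j, adjM x i j * u i ^ 2 := by
    rw [Finset.sum_comm]
    exact Finset.sum_congr rfl fun i _ => Finset.sum_congr rfl fun j _ => by rw [adjM_symm]
  have hR : ∑ e : EdgeIdx d, x e * (u e.1.1 - u e.1.2)^2
      = (1/2) * ∑ i, ∑ j, adjM x i j * (u i - u j)^2 := by
    rw [← sum_edge (fun i j => adjM x i j * (u i - u j)^2)
      (fun i j => by beta_reduce; rw [adjM_symm]; ring)
      (fun i => by simp [adjM_diag])]
    exact Finset.sum_congr rfl fun e _ => by rw [adjM_edge]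
  have hdiagsum : ∀ i, ∑ j, (Matrix.diagonal (fun i => ∑ j, adjM x i j)) i j * u i * u j
      = ∑ j, adjM x i j * u i ^ 2 := by
    intro i
    have h1 : ∑ j, (Matrix.diagonal (fun i => ∑ j, adjM x i j)) i j * u i * u j
        = (∑ j, adjM x i j) * (u i * u i) := by
      simp [Matrix.diagonal_apply, ite_mul, Finset.sum_ite_eq, mul_assoc]
    rw [h1, Finset.sum_mul]
    exact Finset.sum_congr rfl fun j _ => by ring
  rw [lap, lapM, dot_mulVec_expand, hR]
  have hsub : ∑ i, ∑ j, ((Matrix.diagonal (fun i => ∑ j, adjM x i j)) - adjM x) i j * u i * u j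
      = (∑ i, ∑ j, adjM x i j * u i ^ 2) - ∑ i, ∑ j, adjM x i j * (u i * u j) := by
    rw [← Finset.sum_sub_distrib]
    refine Finset.sum_congr rfl fun i _ => ?_
    rw [← hdiagsum i, ← Finset.sum_sub_distrib]
    refine Finset.sum_congr rfl fun j _ => ?_
    simp only [Matrix.sub_apply]; ring
  rw [hsub]
  have hexp : ∑ i, ∑ j, adjM x i j * (u i - u j)^2
      = (∑ i, ∑ j, adjM x i j * u i ^ 2) + (∑ i, ∑ j, adjM x i j * u j ^ 2)
        - 2 * ∑ i, ∑ j, adjM x i j * (u i * u j) := by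
    rw [Finset.mul_sum, ← Finset.sum_add_distrib, ← Finset.sum_sub_distrib]
    refine Finset.sum_congr rfl fun i _ => ?_
    rw [Finset.mul_sum, ← Finset.sum_add_distrib, ← Finset.sum_sub_distrib]
    refine Finset.sum_congr rfl fun j _ => ?_
    ring
  rw [hexp, hswap]
  ring

lemma sum_lapCoeff {d : ℕ} (V : Matrix (Fin d) (Fin d) ℝ) (w : Fin d → ℝ) (x : EdgeIdx d → ℝ) :
    ∑ e, lapCoeff V w e * x e
      = ∑ k, w k * ((fun i => V i k) ⬝ᵥ (lap x *ᵥ fun i => V i k)) := by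
  have h : ∀ k : Fin d, (fun i => V i k) ⬝ᵥ (lap x *ᵥ fun i => V i k)
      = ∑ e : EdgeIdx d, x e * (V e.1.1 k - V e.1.2 k)^2 := fun k => quadForm x (fun i => V i k)
  simp_rw [h, Finset.mul_sum, lapCoeff, Finset.sum_mul]
  rw [Finset.sum_comm]
  exact Finset.sum_congr rfl fun e _ => Finset.sum_congr rfl fun k _ => by ring

lemma colnorm {d : ℕ} {V : Matrix (Fin d) (Fin d) ℝ} (hV : Vᵀ * V = 1) (k : Fin d) :
    ∑ i, V i k * V i k = 1 := by
  have := congrFun (congrFun hV k) k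
  simpa [Matrix.mul_apply, Matrix.one_apply] using this

lemma dot_eigen {d : ℕ} {A V : Matrix (Fin d) (Fin d) ℝ} {lam : Fin d → ℝ}
    (hV : IsEigenDecomp A V lam) (k : Fin d) :
    (fun i => V i k) ⬝ᵥ (A *ᵥ fun i => V i k) = lam k := by
  rw [hV.2 k, dotProduct_smul]
  have : (fun i => V i k) ⬝ᵥ (fun i => V i k) = 1 := colnorm hV.1 k
  rw [smul_eq_mul, this, mul_one]

lemma eigen_matrix_eq {d : ℕ} {A V : Matrix (Fin d) (Fin d) ℝ} {lam : Fin d → ℝ}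
    (hV : IsEigenDecomp A V lam) : A = V * Matrix.diagonal lam * Vᵀ := by
  have hVVt : V * Vᵀ = 1 := mul_eq_one_comm.mp hV.1
  have hAV : A * V = V * Matrix.diagonal lam := by
    ext i k
    have h1 := congrFun (hV.2 k) i
    simp only [Matrix.mulVec, dotProduct, Pi.smul_apply, smul_eq_mul] at h1
    simp only [Matrix.mul_apply, Matrix.diagonal_apply, mul_ite, mul_zero,
      Finset.sum_ite_eq' Finset.univ k, Finset.mem_univ, if_true]
    rw [h1]; ring
  calc A = A * (V * Vᵀ) := by rw [hVVt, Matrix.mul_one]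
    _ = (A * V) * Vᵀ := by rw [Matrix.mul_assoc]
    _ = V * Matrix.diagonal lam * Vᵀ := by rw [hAV]

lemma quad_via_decomp {d : ℕ} {A U : Matrix (Fin d) (Fin d) ℝ} {μ : Fin d → ℝ}
    (hU : IsEigenDecomp A U μ) (u : Fin d → ℝ) :
    u ⬝ᵥ (A *ᵥ u) = ∑ k, μ k * ((Uᵀ *ᵥ u) k)^2 := by
  rw [eigen_matrix_eq hU, ← Matrix.mulVec_mulVec, ← Matrix.mulVec_mulVec,
    Matrix.dotProduct_mulVec, Matrix.mulVec_transpose]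
  simp only [dotProduct, Matrix.mulVec_diagonal]
  exact Finset.sum_congr rfl fun k _ => by ring

lemma spectral_tangent {d : ℕ} (g g' : ℝ → ℝ)
    (htan : ∀ s ∈ Set.Ici (0:ℝ), ∀ t ∈ Set.Ici (0:ℝ), g t ≤ g s + g' s * (t - s))
    {A U V : Matrix (Fin d) (Fin d) ℝ} {μ lam : Fin d → ℝ}
    (hU : IsEigenDecomp A U μ) (hV1 : Vᵀ * V = 1)
    (hμ : ∀ k, 0 ≤ μ k) (hlam : ∀ j, 0 ≤ lam j) :
    ∑ k, g (μ k) ≤ ∑ j, g (lam j)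
      + ∑ j, g' (lam j) * ((fun i => V i j) ⬝ᵥ (A *ᵥ fun i => V i j) - lam j) := by
  have hUo : U * Uᵀ = 1 := mul_eq_one_comm.mp hU.1
  have hVo : V * Vᵀ = 1 := mul_eq_one_comm.mp hV1
  set W := Uᵀ * V with hW
  have hWtW : Wᵀ * W = 1 := by
    rw [hW, Matrix.transpose_mul, Matrix.transpose_transpose, Matrix.mul_assoc,
      ← Matrix.mul_assoc U, hUo, Matrix.one_mul, hV1]
  have hWWt : W * Wᵀ = 1 := mul_eq_one_comm.mp hWtW
  have hrow : ∀ j, ∑ k, (W k j)^2 = 1 := by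
    intro j
    have := congrFun (congrFun hWtW j) j
    simp only [Matrix.mul_apply, Matrix.transpose_apply, Matrix.one_apply_eq] at this
    rw [← this]
    exact Finset.sum_congr rfl fun k _ => by ring
  have hcol : ∀ k, ∑ j, (W k j)^2 = 1 := by
    intro k
    have := congrFun (congrFun hWWt k) k
    simp only [Matrix.mul_apply, Matrix.transpose_apply, Matrix.one_apply_eq] at this
    rw [← this]
    exact Finset.sum_congr rfl fun j _ => by ring
  have hq : ∀ j, (fun i => V i j) ⬝ᵥ (A *ᵥ fun i => V i j) = ∑ k, μ k * (W k j)^2 := by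
    intro j
    rw [quad_via_decomp hU]
    refine Finset.sum_congr rfl fun k _ => ?_
    have h2 : (Uᵀ *ᵥ fun i => V i j) k = W k j := by
      simp [hW, Matrix.mulVec, Matrix.mul_apply, dotProduct]
    rw [h2]
  calc ∑ k, g (μ k) = ∑ k, (∑ j, (W k j)^2) * g (μ k) := by
        refine Finset.sum_congr rfl fun k _ => ?_
        rw [hcol k, one_mul]
    _ = ∑ k, ∑ j, (W k j)^2 * g (μ k) := by
        refine Finset.sum_congr rfl fun k _ => Finset.sum_mul ..
    _ = ∑ j, ∑ k, (W k j)^2 * g (μ k) := Finset.sum_comm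
    _ ≤ ∑ j, ∑ k, (W k j)^2 * (g (lam j) + g' (lam j) * (μ k - lam j)) := by
        refine Finset.sum_le_sum fun j _ => Finset.sum_le_sum fun k _ => ?_
        exact mul_le_mul_of_nonneg_left (htan (lam j) (hlam j) (μ k) (hμ k)) (sq_nonneg _)
    _ = ∑ j, (g (lam j) + g' (lam j) * ((∑ k, μ k * (W k j)^2) - lam j)) := by
        refine Finset.sum_congr rfl fun j _ => ?_
        have e1 : ∀ k : Fin d, (W k j)^2 * (g (lam j) + g' (lam j) * (μ k - lam j))
            = (g (lam j) - g' (lam j) * lam j) * (W k j)^2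
              + g' (lam j) * (μ k * (W k j)^2) := fun k => by ring
        simp_rw [e1]
        rw [Finset.sum_add_distrib, ← Finset.mul_sum, ← Finset.mul_sum, hrow j]
        ring
    _ = ∑ j, g (lam j)
        + ∑ j, g' (lam j) * ((fun i => V i j) ⬝ᵥ (A *ᵥ fun i => V i j) - lam j) := by
        rw [Finset.sum_add_distrib]
        congr 1
        exact Finset.sum_congr rfl fun j _ => by rw [hq j]

lemma eig_nonneg {d : ℕ} {x : EdgeIdx d → ℝ} (hx : ∀ e, 0 ≤ x e)
    {V : Matrix (Fin d) (Fin d) ℝ} {lam : Fin d → ℝ}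
    (hV : IsEigenDecomp (lap x) V lam) (k : Fin d) : 0 ≤ lam k := by
  rw [← dot_eigen hV k, quadForm]
  exact Finset.sum_nonneg fun e _ => mul_nonneg (hx e) (sq_nonneg _)

lemma lap_isHermitian {d : ℕ} (x : EdgeIdx d → ℝ) : (lap x).IsHermitian := by
  ext i j
  simp only [lap, lapM, Matrix.conjTranspose_apply, Matrix.sub_apply, Matrix.diagonal_apply,
    star_trivial]
  rcases eq_or_ne i j with h | h
  · subst h; simp
  · simp [h, Ne.symm h, adjM_symm]

lemma mathlib_decomp {d : ℕ} {A : Matrix (Fin d) (Fin d) ℝ} (hA : A.IsHermitian) :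
    IsEigenDecomp A (Matrix.of fun i k => hA.eigenvectorBasis k i) hA.eigenvalues := by
  constructor
  · ext k l
    have horth := hA.eigenvectorBasis.orthonormal
    rw [orthonormal_iff_ite] at horth
    have h2 := horth k l
    simp only [PiLp.inner_apply, RCLike.inner_apply, conj_trivial] at h2
    simp only [Matrix.mul_apply, Matrix.transpose_apply, Matrix.one_apply, Matrix.of_apply]
    rw [← h2]; exact Finset.sum_congr rfl fun _ _ => mul_comm _ _
  · intro k
    exact hA.mulVec_eigenvectorBasis k

lemma sum_eigs_eq {d : ℕ} {A : Matrix (Fin d) (Fin d) ℝ} (hA : A.IsHermitian) (f : ℝ → ℝ) :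
    ∑ j, f (eigs A j) = ∑ k, f (hA.eigenvalues k) := by
  rw [eigs, dif_pos hA]
  set v : Fin (Fintype.card (Fin d)) → ℝ := hA.eigenvalues ∘ (Fintype.equivFin (Fin d)).symm
    with hv
  calc ∑ j, f ((v ∘ ⇑(Tuple.sort v)) j) = ∑ j, f (v j) :=
        Equiv.sum_comp (Tuple.sort v) (fun j => f (v j))
    _ = ∑ k, f (hA.eigenvalues k) :=
        Equiv.sum_comp (Fintype.equivFin (Fin d)).symm (fun k => f (hA.eigenvalues k))

lemma tangent_line (g g' : ℝ → ℝ) (hconc : ConcaveOn ℝ (Set.Ici 0) g)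
    (hderiv : ∀ t ∈ Set.Ici (0:ℝ), HasDerivWithinAt g (g' t) (Set.Ici 0) t) :
    ∀ s ∈ Set.Ici (0:ℝ), ∀ t ∈ Set.Ici (0:ℝ), g t ≤ g s + g' s * (t - s) := by
  intro s hs t ht
  rcases lt_trichotomy s t with h | h | h
  · have h1 := hconc.slope_le_of_hasDerivWithinAt hs ht h (hderiv s hs)
    rw [slope_def_field] at h1
    have h2 := (div_le_iff₀ (by linarith)).mp h1
    linarith
  · subst h; simp
  · have h1 := hconc.le_slope_of_hasDerivWithinAt ht hs h (hderiv s hs)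
    rw [slope_def_field] at h1
    have h2 := (le_div_iff₀ (by linarith)).mp h1
    linarith

/-- majorization of the folded concave Laplacian spectral penalty
by a weighted `ℓ1` surrogate, with equality at the base point. -/
theorem stmt_0 {d : ℕ} (hd : 2 ≤ d)
    (g g' : ℝ → ℝ)
    (hconc : ConcaveOn ℝ (Set.Ici 0) g)
    (hmono : MonotoneOn g (Set.Ici 0))
    (hderiv : ∀ t ∈ Set.Ici (0 : ℝ), HasDerivWithinAt g (g' t) (Set.Ici 0) t)
    (b β : EdgeIdx d → ℝ)
    (V : Matrix (Fin d) (Fin d) ℝ) (lam : Fin d → ℝ)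
    (hVlam : IsEigenDecomp (lap fun e => |b e|) V lam) :
    (∑ j, g (eigs (lap fun e => |β e|) j))
      ≤ (∑ j, g (eigs (lap fun e => |b e|) j))
        + ∑ e, lapCoeff V (fun k => g' (lam k)) e * (|β e| - |b e|) ∧
    (∑ j, g (eigs (lap fun e => |b e|) j)) = ∑ k, g (lam k) := by
  have htan := tangent_line g g' hconc hderiv
  have hAh : (lap fun e => |β e|).IsHermitian := lap_isHermitian _
  have hBh : (lap fun e => |b e|).IsHermitian := lap_isHermitian _
  have hUA := mathlib_decomp hAh
  have hUB := mathlib_decomp hBh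
  have hμA : ∀ k, 0 ≤ hAh.eigenvalues k := eig_nonneg (fun e => abs_nonneg _) hUA
  have hνB : ∀ k, 0 ≤ hBh.eigenvalues k := eig_nonneg (fun e => abs_nonneg _) hUB
  have hlamnn : ∀ k, 0 ≤ lam k := eig_nonneg (fun e => abs_nonneg _) hVlam
  have hsA := sum_eigs_eq hAh g
  have hsB := sum_eigs_eq hBh g
  have heq : ∑ k, g (hBh.eigenvalues k) = ∑ k, g (lam k) := by
    apply le_antisymm
    · have h1 := spectral_tangent g g' htan hUB hVlam.1 hνB hlamnn
      simpa [dot_eigen hVlam] using h1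
    · have h2 := spectral_tangent g g' htan hVlam hUB.1 hlamnn hνB
      have hz := dot_eigen hUB
      simp only [Matrix.of_apply] at hz
      simpa [hz] using h2
  refine ⟨?_, by rw [hsB]; exact heq⟩
  have h3 := spectral_tangent g g' htan hUA hVlam.1 hμA hlamnn
  have hM : ∑ e, lapCoeff V (fun k => g' (lam k)) e * (|β e| - |b e|)
      = ∑ j, g' (lam j)
          * ((fun i => V i j) ⬝ᵥ ((lap fun e => |β e|) *ᵥ fun i => V i j) - lam j) := by
    have e1 : ∀ e : EdgeIdx d, lapCoeff V (fun k => g' (lam k)) e * (|β e| - |b e|)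
        = lapCoeff V (fun k => g' (lam k)) e * |β e|
          - lapCoeff V (fun k => g' (lam k)) e * |b e| := fun e => by ring
    simp_rw [e1]
    rw [Finset.sum_sub_distrib, sum_lapCoeff, sum_lapCoeff, ← Finset.sum_sub_distrib]
    refine Finset.sum_congr rfl fun j _ => ?_
    rw [dot_eigen hVlam j]
    ring
  rw [hsA, hsB, heq, hM]
  exact h3

end FCLS
end

section
/- Let d ≥ 2, D = C(d,2), and let L ∈ ℝ^{d×d} be symmetric with eigenvalues λ_1, …, λ_d (with multiplicity). Suppose V, Ṽ ∈ ℝ^{d×d} are two orthogonal matrices such that for each k the k-th columns of V and of Ṽ are eigenvectors of L with eigenvalue λ_k. Then for any function f: ℝ → ℝ, ℳ(V, f(λ)) = ℳ(Ṽ, f(λ)), where f(λ) ∈ ℝ^d is f applied entrywise to the eigenvalues; that is, the Laplacian coefficient does not depend on the choice of orthonormal eigenbasis. Moreover, for any orthogonal matrix V ∈ ℝ^{d×d} and any constant c ≥ 0, ℳ(V, c·𝟙_d) = 2c·𝟙_D, so that majorizing at b = 0 leaves the surrogate ½ ℳ(V, g'(0)·𝟙_d)ᵀ|β| = g'(0)·‖β‖_1.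 -/
open scoped BigOperators
open Matrix

namespace FCLS

lemma lapCoeff_eq_entries {d : ℕ} (V : Matrix (Fin d) (Fin d) ℝ) (g : Fin d → ℝ)
    (e : EdgeIdx d) :
    lapCoeff V g e = (V * Matrix.diagonal g * Vᵀ) e.1.1 e.1.1
      + (V * Matrix.diagonal g * Vᵀ) e.1.2 e.1.2
      - 2 * (V * Matrix.diagonal g * Vᵀ) e.1.1 e.1.2 := by
  have hM : ∀ a b, (V * Matrix.diagonal g * Vᵀ) a b = ∑ k, g k * (V a k * V b k) := by
    intro a b
    rw [Matrix.mul_assoc, Matrix.mul_apply]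
    exact Finset.sum_congr rfl fun k _ => by
      rw [Matrix.diagonal_mul, Matrix.transpose_apply]; ring
  simp only [lapCoeff, hM]
  rw [Finset.mul_sum, ← Finset.sum_add_distrib, ← Finset.sum_sub_distrib]
  exact Finset.sum_congr rfl fun k _ => by ring

lemma eigcols_to_mul {d : ℕ} (L V : Matrix (Fin d) (Fin d) ℝ) (lam : Fin d → ℝ)
    (h : ∀ k, L *ᵥ (fun i => V i k) = lam k • fun i => V i k) :
    L * V = V * Matrix.diagonal lam := by
  ext i k
  rw [Matrix.mul_diagonal]
  have := congrFun (h k) i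
  simpa [Matrix.mulVec, dotProduct, Matrix.mul_apply, mul_comm] using this

/-- the Laplacian coefficient `ℳ(V, f(λ))` does not depend on the
choice of orthonormal eigenbasis; for constant weights it reduces to a Lasso. -/
theorem stmt_1 {d : ℕ} (hd : 2 ≤ d) :
    (∀ L : Matrix (Fin d) (Fin d) ℝ, L.IsSymm →
      ∀ (lam : Fin d → ℝ) (V W : Matrix (Fin d) (Fin d) ℝ),
        Vᵀ * V = 1 → Wᵀ * W = 1 →
        (∀ k, L *ᵥ (fun i => V i k) = lam k • fun i => V i k) →
        (∀ k, L *ᵥ (fun i => W i k) = lam k • fun i => W i k) →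
        ∀ f : ℝ → ℝ, lapCoeff V (fun k => f (lam k)) = lapCoeff W (fun k => f (lam k))) ∧
    (∀ V : Matrix (Fin d) (Fin d) ℝ, Vᵀ * V = 1 → ∀ c : ℝ, 0 ≤ c →
      (lapCoeff V (fun _ => c) = fun _ => 2 * c) ∧
      ∀ β : EdgeIdx d → ℝ,
        (1 / 2) * ∑ e, lapCoeff V (fun _ => c) e * |β e| = c * ∑ e, |β e|) := by
  constructor
  · intro L hL lam V W hVo hWo hV hW f
    have hV' := eigcols_to_mul L V lam hV
    have hW' := eigcols_to_mul L W lam hW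
    have hVVt : V * Vᵀ = 1 := mul_eq_one_comm.mp hVo
    have hWWt : W * Wᵀ = 1 := mul_eq_one_comm.mp hWo
    set U := Vᵀ * W with hU
    have hVU : V * U = W := by rw [hU, ← Matrix.mul_assoc, hVVt, Matrix.one_mul]
    -- D commutes with U
    have hDU : Matrix.diagonal lam * U = U * Matrix.diagonal lam := by
      have hVtL : Vᵀ * L = Matrix.diagonal lam * Vᵀ := by
        have := congrArg Matrix.transpose hV'
        rw [Matrix.transpose_mul, Matrix.transpose_mul, hL.eq,
          Matrix.diagonal_transpose] at this
        exact this
      calc Matrix.diagonal lam * U = (Matrix.diagonal lam * Vᵀ) * W := by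
            rw [hU, Matrix.mul_assoc]
        _ = Vᵀ * (L * W) := by rw [← hVtL, Matrix.mul_assoc]
        _ = U * Matrix.diagonal lam := by rw [hW', hU, Matrix.mul_assoc]
    -- f ∘ lam diagonal commutes with U
    have hfU : Matrix.diagonal (fun k => f (lam k)) * U
        = U * Matrix.diagonal (fun k => f (lam k)) := by
      ext k l
      have h1 : lam k * U k l = U k l * lam l := by
        have := congrFun (congrFun hDU k) l
        simpa [Matrix.diagonal_mul, Matrix.mul_diagonal] using this
      simp only [Matrix.diagonal_mul, Matrix.mul_diagonal]
      by_cases h0 : U k l = 0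
      · simp [h0]
      · have : lam k = lam l := by
          have := h1
          rw [mul_comm (U k l) (lam l)] at this
          exact mul_right_cancel₀ h0 (by linarith [this])
        rw [this, mul_comm]
    have hUUt : U * Uᵀ = 1 := by
      rw [hU, Matrix.transpose_mul, Matrix.transpose_transpose,
        Matrix.mul_assoc, ← Matrix.mul_assoc W Wᵀ V, hWWt, Matrix.one_mul, hVo]
    set Df := Matrix.diagonal (fun k => f (lam k)) with hDf
    have h1 : U * Df * Uᵀ = Df := by
      rw [← hfU, Matrix.mul_assoc, hUUt, Matrix.mul_one]
    have key : W * Df * Wᵀ = V * Df * Vᵀ := by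
      rw [← hVU, Matrix.transpose_mul]
      calc V * U * Df * (Uᵀ * Vᵀ) = V * (U * Df * Uᵀ) * Vᵀ := by
            simp only [Matrix.mul_assoc]
        _ = V * Df * Vᵀ := by rw [h1]
    funext e
    rw [lapCoeff_eq_entries, lapCoeff_eq_entries, key]
  · intro V hVo c hc
    have hVVt : V * Vᵀ = 1 := mul_eq_one_comm.mp hVo
    have hM : V * Matrix.diagonal (fun _ : Fin d => c) * Vᵀ = c • (1 : Matrix (Fin d) (Fin d) ℝ) := by
      have : Matrix.diagonal (fun _ : Fin d => c) = c • (1 : Matrix (Fin d) (Fin d) ℝ) := by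
        ext i j; simp [Matrix.diagonal_apply, Matrix.one_apply]
      rw [this, Matrix.mul_smul, Matrix.mul_one, Matrix.smul_mul, hVVt]
    have hconst : lapCoeff V (fun _ => c) = fun _ => 2 * c := by
      funext e
      rw [lapCoeff_eq_entries, hM]
      have hne : e.1.1 ≠ e.1.2 := ne_of_lt e.2
      simp [Matrix.one_apply, hne]
      ring
    refine ⟨hconst, fun β => ?_⟩
    rw [hconst]
    rw [Finset.mul_sum, Finset.mul_sum]
    exact Finset.sum_congr rfl fun e _ => by ring

end FCLS
end

section
/- Let w ∈ ℝ_{≥0}^K and V_A, V_B ∈ ℝ^{d×K}. Then: (a) for every pair (ij), |√(ℳ(V_A, w)_{(ij)}) − √(ℳ(V_B, w)_{(ij)})| ≤ 2√(max(w))·‖V_A − V_B‖_{2→∞}; (b) if 𝒢 is a (binary, undirected) graph on d vertices whose largest connected component has d*_max vertices, then Σ_{(ij)∈𝒢} |√(ℳ(V_A, w)_{(ij)}) − √(ℳ(V_B, w)_{(ij)})|² ≤ 2·max(w)·d*_max·‖V_A − V_B‖_F², where each edge is counted once; and (c) Σ_{(ij)∈𝒢} |√(ℳ(V_A, w)_{(ij)})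 − √(ℳ(V_B, w)_{(ij)})|⁴ ≤ 8·max(w)²·d*_max·‖V_A − V_B‖_F⁴. -/
open scoped BigOperators
open Matrix

namespace FCLS

/-! ### Auxiliary lemmas for `stmt_7` -/

/-- Coerce a plain vector into Euclidean space. -/
noncomputable def eucFCLS {K : ℕ} (a : Fin K → ℝ) : EuclideanSpace ℝ (Fin K) :=
  (WithLp.equiv 2 _).symm a

lemma eucFCLS_norm {K : ℕ} (a : Fin K → ℝ) : ‖eucFCLS a‖ = Real.sqrt (∑ k, a k ^ 2) := by
  simp [eucFCLS, EuclideanSpace.norm_eq, Real.norm_eq_abs, sq_abs]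

lemma eucFCLS_sub {K : ℕ} (a b : Fin K → ℝ) :
    eucFCLS a - eucFCLS b = eucFCLS (fun k => a k - b k) := rfl

lemma abs_sqrt_sub_FCLS {K : ℕ} (a b : Fin K → ℝ) :
    |Real.sqrt (∑ k, a k ^ 2) - Real.sqrt (∑ k, b k ^ 2)|
      ≤ Real.sqrt (∑ k, (a k - b k) ^ 2) := by
  have h := abs_norm_sub_norm_le (eucFCLS a) (eucFCLS b)
  rwa [eucFCLS_norm, eucFCLS_norm, eucFCLS_sub, eucFCLS_norm] at h

lemma sqrt_sub_le_FCLS {K : ℕ} (a b : Fin K → ℝ) :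
    Real.sqrt (∑ k, (a k - b k) ^ 2)
      ≤ Real.sqrt (∑ k, a k ^ 2) + Real.sqrt (∑ k, b k ^ 2) := by
  have h := norm_sub_le (eucFCLS a) (eucFCLS b)
  rwa [eucFCLS_norm, eucFCLS_norm, eucFCLS_sub, eucFCLS_norm] at h

lemma deg_le_maxCompCard {d : ℕ} (G : SimpleGraph (Fin d)) [DecidableRel G.Adj] (i : Fin d) :
    (Finset.univ.filter (G.Adj i)).card ≤ maxCompCard G := by
  have h1 : (Finset.univ.filter (G.Adj i)).card = Fintype.card {j // G.Adj i j} :=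
    (Fintype.card_subtype _).symm
  have h3 : Nat.card {j // G.Adj i j} ≤ Nat.card {j // G.Reachable i j} :=
    Nat.card_le_card_of_injective (fun x => ⟨x.1, x.2.reachable⟩)
      (fun x y h => by simpa [Subtype.ext_iff] using h)
  have h4 : compCard G i ≤ maxCompCard G := Finset.le_sup (Finset.mem_univ i)
  calc (Finset.univ.filter (G.Adj i)).card = Nat.card {j // G.Adj i j} := by
        rw [h1, Nat.card_eq_fintype_card]
    _ ≤ compCard G i := h3
    _ ≤ maxCompCard G := h4

lemma edge_sum_eq_FCLS {d : ℕ} (G : SimpleGraph (Fin d)) [DecidableRel G.Adj] (g : Fin d → ℝ) :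
    ∑ e : EdgeIdx d, (if G.Adj e.1.1 e.1.2 then g e.1.1 + g e.1.2 else 0)
      = ∑ p : Fin d × Fin d, (if G.Adj p.1 p.2 then g p.1 else 0) := by
  classical
  set s := Finset.univ.filter (fun p : Fin d × Fin d => p.1 < p.2) with hs
  set t := Finset.univ.filter (fun p : Fin d × Fin d => p.2 < p.1) with ht
  have h1 : ∑ e : EdgeIdx d, (if G.Adj e.1.1 e.1.2 then g e.1.1 + g e.1.2 else 0)
      = ∑ p ∈ s, (if G.Adj p.1 p.2 then g p.1 + g p.2 else 0) :=
    (Finset.sum_subtype (s := s) (p := fun p : Fin d × Fin d => p.1 < p.2) (by simp [hs])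
      (fun p => if G.Adj p.1 p.2 then g p.1 + g p.2 else 0)).symm
  have h2 : ∑ p ∈ s, (if G.Adj p.1 p.2 then g p.2 else 0)
      = ∑ p ∈ t, (if G.Adj p.1 p.2 then g p.1 else 0) := by
    refine Finset.sum_nbij' (fun p => Prod.swap p) (fun p => Prod.swap p) ?_ ?_ ?_ ?_ ?_
    · intro a ha; simp [hs, ht] at ha ⊢; exact ha
    · intro a ha; simp [hs, ht] at ha ⊢; exact ha
    · intro a _; simp
    · intro a _; simp
    · intro a _
      simp only [Prod.fst_swap, Prod.snd_swap, G.adj_comm a.1 a.2]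
  have hdisj : Disjoint s t := by
    rw [Finset.disjoint_left]; intro p hp hq
    simp [hs, ht] at hp hq; exact absurd hq (not_lt_of_gt hp)
  have h3 : ∑ p ∈ s ∪ t, (if G.Adj p.1 p.2 then g p.1 else 0)
      = ∑ p : Fin d × Fin d, (if G.Adj p.1 p.2 then g p.1 else 0) := by
    refine Finset.sum_subset (Finset.subset_univ _) ?_
    intro p _ hp
    have h1' : ¬ p.1 < p.2 := fun h => hp (Finset.mem_union_left _ (by simp [hs, h]))
    have h2' : ¬ p.2 < p.1 := fun h => hp (Finset.mem_union_right _ (by simp [ht, h]))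
    have heq : p.1 = p.2 := le_antisymm (le_of_not_gt h2') (le_of_not_gt h1')
    rw [heq]; simp
  rw [h1, ← h3, Finset.sum_union hdisj, ← h2]
  rw [← Finset.sum_add_distrib]
  refine Finset.sum_congr rfl fun p _ => ?_
  split <;> simp

lemma edge_sum_le_FCLS {d : ℕ} (G : SimpleGraph (Fin d)) [DecidableRel G.Adj] (g : Fin d → ℝ)
    (hg : ∀ i, 0 ≤ g i) :
    ∑ e : EdgeIdx d, (if G.Adj e.1.1 e.1.2 then g e.1.1 + g e.1.2 else 0)
      ≤ (maxCompCard G : ℝ) * ∑ i, g i := by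
  rw [edge_sum_eq_FCLS, Fintype.sum_prod_type]
  have h : ∀ i : Fin d, (∑ j, if G.Adj i j then g i else 0)
      = ((Finset.univ.filter (G.Adj i)).card : ℝ) * g i := by
    intro i
    rw [← Finset.sum_filter, Finset.sum_const, nsmul_eq_mul]
  rw [Finset.sum_congr rfl fun i _ => h i, Finset.mul_sum]
  refine Finset.sum_le_sum fun i _ => ?_
  exact mul_le_mul_of_nonneg_right (by exact_mod_cast deg_le_maxCompCard G i) (hg i)

/-- stability of the Laplacian coefficient in the eigenvector matrix. -/
theorem stmt_7 {d K : ℕ} (hd : 2 ≤ d) (w : Fin K → ℝ) (hw : ∀ k, 0 ≤ w k)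
    (VA VB : Matrix (Fin d) (Fin K) ℝ)
    (G : SimpleGraph (Fin d)) [DecidableRel G.Adj] :
    (∀ e : EdgeIdx d,
      |Real.sqrt (lapCoeff VA w e) - Real.sqrt (lapCoeff VB w e)|
        ≤ 2 * Real.sqrt (⨆ k, w k) * twoInf (VA - VB)) ∧
    (∑ e : EdgeIdx d, (if G.Adj e.1.1 e.1.2 then
        |Real.sqrt (lapCoeff VA w e) - Real.sqrt (lapCoeff VB w e)| ^ 2 else 0))
      ≤ 2 * (⨆ k, w k) * (maxCompCard G : ℝ) * frob (VA - VB) ^ 2 ∧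
    (∑ e : EdgeIdx d, (if G.Adj e.1.1 e.1.2 then
        |Real.sqrt (lapCoeff VA w e) - Real.sqrt (lapCoeff VB w e)| ^ 4 else 0))
      ≤ 8 * (⨆ k, w k) ^ 2 * (maxCompCard G : ℝ) * frob (VA - VB) ^ 4 := by
  classical
  set W := ⨆ k, w k with hWdef
  have hW : 0 ≤ W := Real.iSup_nonneg hw
  set D := VA - VB with hD
  set r : Fin d → ℝ := fun i => Real.sqrt (∑ k, D i k ^ 2) with hr
  have hrnn : ∀ i, 0 ≤ r i := fun i => Real.sqrt_nonneg _
  set g : Fin d → ℝ := fun i => ∑ k, D i k ^ 2 with hg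
  have hgnn : ∀ i, 0 ≤ g i := fun i => Finset.sum_nonneg fun k _ => sq_nonneg _
  have hrg : ∀ i, r i ^ 2 = g i := fun i => Real.sq_sqrt (hgnn i)
  have key : ∀ e : EdgeIdx d,
      |Real.sqrt (lapCoeff VA w e) - Real.sqrt (lapCoeff VB w e)|
        ≤ Real.sqrt W * (r e.1.1 + r e.1.2) := by
    rintro ⟨⟨i, j⟩, hij⟩
    have hA : lapCoeff VA w ⟨(i, j), hij⟩
        = ∑ k, (Real.sqrt (w k) * (VA i k - VA j k)) ^ 2 := by
      refine Finset.sum_congr rfl fun k _ => ?_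
      rw [mul_pow, Real.sq_sqrt (hw k)]
    have hB : lapCoeff VB w ⟨(i, j), hij⟩
        = ∑ k, (Real.sqrt (w k) * (VB i k - VB j k)) ^ 2 := by
      refine Finset.sum_congr rfl fun k _ => ?_
      rw [mul_pow, Real.sq_sqrt (hw k)]
    rw [hA, hB]
    refine (abs_sqrt_sub_FCLS _ _).trans ?_
    have h2 : ∀ k : Fin K,
        (Real.sqrt (w k) * (VA i k - VA j k) - Real.sqrt (w k) * (VB i k - VB j k)) ^ 2
          = w k * (D i k - D j k) ^ 2 := by
      intro k
      have hstep : Real.sqrt (w k) * (VA i k - VA j k) - Real.sqrt (w k) * (VB i k - VB j k)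
          = Real.sqrt (w k) * (D i k - D j k) := by
        simp only [hD, Matrix.sub_apply]; ring
      rw [hstep, mul_pow, Real.sq_sqrt (hw k)]
    rw [Finset.sum_congr rfl fun k _ => h2 k]
    have h3 : ∑ k, w k * (D i k - D j k) ^ 2 ≤ W * ∑ k, (D i k - D j k) ^ 2 := by
      rw [Finset.mul_sum]
      refine Finset.sum_le_sum fun k _ => ?_
      refine mul_le_mul_of_nonneg_right ?_ (sq_nonneg _)
      rw [hWdef]
      exact le_ciSup (Set.Finite.bddAbove (Set.finite_range w)) k
    calc Real.sqrt (∑ k, w k * (D i k - D j k) ^ 2)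
        ≤ Real.sqrt (W * ∑ k, (D i k - D j k) ^ 2) := Real.sqrt_le_sqrt h3
      _ = Real.sqrt W * Real.sqrt (∑ k, (D i k - D j k) ^ 2) := Real.sqrt_mul hW _
      _ ≤ Real.sqrt W * (r i + r j) :=
          mul_le_mul_of_nonneg_left (sqrt_sub_le_FCLS _ _) (Real.sqrt_nonneg _)
  have keyb : ∀ e : EdgeIdx d,
      |Real.sqrt (lapCoeff VA w e) - Real.sqrt (lapCoeff VB w e)| ^ 2
        ≤ 2 * W * (g e.1.1 + g e.1.2) := by
    intro e
    have h := key e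
    have habs := abs_nonneg (Real.sqrt (lapCoeff VA w e) - Real.sqrt (lapCoeff VB w e))
    have hW2 : Real.sqrt W ^ 2 = W := Real.sq_sqrt hW
    have hmul := mul_le_mul h h habs
      (mul_nonneg (Real.sqrt_nonneg _) (add_nonneg (hrnn _) (hrnn _)))
    nlinarith [hrg e.1.1, hrg e.1.2, hrnn e.1.1, hrnn e.1.2,
      sq_nonneg (r e.1.1 - r e.1.2), Real.sqrt_nonneg W,
      mul_nonneg hW (sq_nonneg (r e.1.1 - r e.1.2))]
  have keyc : ∀ e : EdgeIdx d,
      |Real.sqrt (lapCoeff VA w e) - Real.sqrt (lapCoeff VB w e)| ^ 4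
        ≤ 8 * W ^ 2 * (g e.1.1 ^ 2 + g e.1.2 ^ 2) := by
    intro e
    have hb := keyb e
    have h2 := mul_self_le_mul_self
      (sq_nonneg (|Real.sqrt (lapCoeff VA w e) - Real.sqrt (lapCoeff VB w e)|)) hb
    nlinarith [mul_nonneg (mul_nonneg hW hW) (sq_nonneg (g e.1.1 - g e.1.2)),
      hgnn e.1.1, hgnn e.1.2]
  have hfrob : frob D ^ 2 = ∑ i, g i := by
    unfold frob
    exact Real.sq_sqrt (Finset.sum_nonneg fun i _ => hgnn i)
  refine ⟨?_, ?_, ?_⟩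
  · intro e
    refine (key e).trans ?_
    have h1 : r e.1.1 ≤ twoInf D := by
      unfold twoInf
      exact le_ciSup (Set.Finite.bddAbove (Set.finite_range _)) e.1.1
    have h2 : r e.1.2 ≤ twoInf D := by
      unfold twoInf
      exact le_ciSup (Set.Finite.bddAbove (Set.finite_range _)) e.1.2
    calc Real.sqrt W * (r e.1.1 + r e.1.2)
        ≤ Real.sqrt W * (twoInf D + twoInf D) :=
          mul_le_mul_of_nonneg_left (add_le_add h1 h2) (Real.sqrt_nonneg _)
      _ = 2 * Real.sqrt W * twoInf D := by ring
  · have hsum : ∑ e : EdgeIdx d, (if G.Adj e.1.1 e.1.2 then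
        |Real.sqrt (lapCoeff VA w e) - Real.sqrt (lapCoeff VB w e)| ^ 2 else 0)
        ≤ ∑ e : EdgeIdx d, (if G.Adj e.1.1 e.1.2 then 2 * W * (g e.1.1 + g e.1.2) else 0) := by
      refine Finset.sum_le_sum fun e _ => ?_
      split
      · exact keyb e
      · exact le_rfl
    have h2 : ∑ e : EdgeIdx d, (if G.Adj e.1.1 e.1.2 then 2 * W * (g e.1.1 + g e.1.2) else 0)
        = 2 * W * ∑ e : EdgeIdx d, (if G.Adj e.1.1 e.1.2 then g e.1.1 + g e.1.2 else 0) := by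
      rw [Finset.mul_sum]
      refine Finset.sum_congr rfl fun e _ => ?_
      split <;> simp
    have h3 := edge_sum_le_FCLS G g hgnn
    calc ∑ e : EdgeIdx d, (if G.Adj e.1.1 e.1.2 then
          |Real.sqrt (lapCoeff VA w e) - Real.sqrt (lapCoeff VB w e)| ^ 2 else 0)
        ≤ 2 * W * ∑ e : EdgeIdx d, (if G.Adj e.1.1 e.1.2 then g e.1.1 + g e.1.2 else 0) := by
          rw [← h2]; exact hsum
      _ ≤ 2 * W * ((maxCompCard G : ℝ) * ∑ i, g i) :=
          mul_le_mul_of_nonneg_left h3 (by linarith)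
      _ = 2 * W * (maxCompCard G : ℝ) * frob D ^ 2 := by rw [hfrob]; ring
  · have hsum : ∑ e : EdgeIdx d, (if G.Adj e.1.1 e.1.2 then
        |Real.sqrt (lapCoeff VA w e) - Real.sqrt (lapCoeff VB w e)| ^ 4 else 0)
        ≤ ∑ e : EdgeIdx d, (if G.Adj e.1.1 e.1.2 then
            8 * W ^ 2 * (g e.1.1 ^ 2 + g e.1.2 ^ 2) else 0) := by
      refine Finset.sum_le_sum fun e _ => ?_
      split
      · exact keyc e
      · exact le_rfl
    have h2 : ∑ e : EdgeIdx d, (if G.Adj e.1.1 e.1.2 then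
          8 * W ^ 2 * (g e.1.1 ^ 2 + g e.1.2 ^ 2) else 0)
        = 8 * W ^ 2 * ∑ e : EdgeIdx d,
            (if G.Adj e.1.1 e.1.2 then g e.1.1 ^ 2 + g e.1.2 ^ 2 else 0) := by
      rw [Finset.mul_sum]
      refine Finset.sum_congr rfl fun e _ => ?_
      split <;> simp
    have h3 := edge_sum_le_FCLS G (fun i => g i ^ 2) (fun i => sq_nonneg _)
    have hsq : ∑ i, g i ^ 2 ≤ (∑ i, g i) ^ 2 := by
      calc ∑ i, g i ^ 2 ≤ ∑ i, g i * ∑ j, g j := by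
            refine Finset.sum_le_sum fun i _ => ?_
            have hle := Finset.single_le_sum (fun j _ => hgnn j) (Finset.mem_univ i)
            nlinarith [hgnn i]
        _ = (∑ i, g i) ^ 2 := by rw [← Finset.sum_mul]; ring
    have hfrob4 : frob D ^ 4 = (∑ i, g i) ^ 2 := by
      have : frob D ^ 4 = (frob D ^ 2) ^ 2 := by ring
      rw [this, hfrob]
    calc ∑ e : EdgeIdx d, (if G.Adj e.1.1 e.1.2 then
          |Real.sqrt (lapCoeff VA w e) - Real.sqrt (lapCoeff VB w e)| ^ 4 else 0)
        ≤ 8 * W ^ 2 * ∑ e : EdgeIdx d,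
            (if G.Adj e.1.1 e.1.2 then g e.1.1 ^ 2 + g e.1.2 ^ 2 else 0) := by
          rw [← h2]; exact hsum
      _ ≤ 8 * W ^ 2 * ((maxCompCard G : ℝ) * ∑ i, g i ^ 2) :=
          mul_le_mul_of_nonneg_left h3 (by positivity)
      _ ≤ 8 * W ^ 2 * ((maxCompCard G : ℝ) * (∑ i, g i) ^ 2) := by
          refine mul_le_mul_of_nonneg_left ?_ (by positivity)
          exact mul_le_mul_of_nonneg_left hsq (Nat.cast_nonneg _)
      _ = 8 * W ^ 2 * (maxCompCard G : ℝ) * frob D ^ 4 := by rw [hfrob4]; ring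


end FCLS
end

section
/- Let A ∈ ℝ^{d×d} be a hollow symmetric matrix with nonnegative entries whose support graph has K connected components, the largest containing d*_max vertices. Let V ∈ ℝ^{d×K} be any matrix whose columns form an orthonormal basis of the kernel of the Laplacian ℒ(A) = diag(A𝟙_d) − A. Then for any w ∈ ℝ_{≥0}^K and any pair of distinct vertices i, j: ℳ(V, w)_{(ij)} = 0 if i and j lie in the same connected component, and ℳ(V, w)_{(ij)} ≥ min(w)·(1/|C(i)| + 1/|C(j)|) ≥ 2·min(w)/d*_max if i and j lie in different connected components, where |C(i)| is the number of vertices of the connected component containing i. -/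
open scoped BigOperators
open Matrix

namespace FCLS

lemma lapM_mulVec_apply {d : ℕ} (A : Matrix (Fin d) (Fin d) ℝ) (v : Fin d → ℝ) (i : Fin d) :
    (lapM A *ᵥ v) i = ∑ j, A i j * (v i - v j) := by
  simp only [lapM, Matrix.mulVec, dotProduct, Matrix.sub_apply, Matrix.diagonal_apply,
    sub_mul, ite_mul, zero_mul, Finset.sum_sub_distrib, Finset.sum_ite_eq, Finset.mem_univ,
    if_true]
  rw [Finset.sum_mul, ← Finset.sum_sub_distrib]
  exact Finset.sum_congr rfl fun j _ => by ring

lemma ker_of_const {d : ℕ} (A : Matrix (Fin d) (Fin d) ℝ) (v : Fin d → ℝ)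
    (h : ∀ p q, A p q ≠ 0 → v p = v q) : lapM A *ᵥ v = 0 := by
  funext i
  rw [lapM_mulVec_apply]
  refine Finset.sum_eq_zero fun j _ => ?_
  by_cases hA : A i j = 0
  · simp [hA]
  · simp [h i j hA]

lemma ker_apply_eq {d : ℕ} (A : Matrix (Fin d) (Fin d) ℝ) (hsymm : A.IsSymm)
    (hnn : ∀ i j, 0 ≤ A i j) (v : Fin d → ℝ) (hv : lapM A *ᵥ v = 0) :
    ∀ i j, A i j ≠ 0 → v i = v j := by
  have hAsy : ∀ a b, A b a = A a b := fun a b => congrFun (congrFun hsymm a) b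
  have hS1 : ∑ i, ∑ j, A i j * ((v i - v j) * v i) = 0 := by
    have : ∀ i, ∑ j, A i j * ((v i - v j) * v i) = v i * (lapM A *ᵥ v) i := by
      intro i
      rw [lapM_mulVec_apply, Finset.mul_sum]
      exact Finset.sum_congr rfl fun j _ => by ring
    simp [this, hv]
  have hswap : ∑ i, ∑ j, A i j * ((v i - v j) * v j)
      = - ∑ i, ∑ j, A i j * ((v i - v j) * v i) := by
    rw [Finset.sum_comm, ← Finset.sum_neg_distrib]
    refine Finset.sum_congr rfl fun i _ => ?_
    rw [← Finset.sum_neg_distrib]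
    refine Finset.sum_congr rfl fun j _ => ?_
    rw [hAsy]
    ring
  have hQ : ∑ i, ∑ j, A i j * (v i - v j) ^ 2 = 0 := by
    have expand : ∀ i j : Fin d, A i j * (v i - v j) ^ 2
        = A i j * ((v i - v j) * v i) - A i j * ((v i - v j) * v j) := by
      intro i j; ring
    simp only [expand, Finset.sum_sub_distrib, hswap, hS1]
    ring
  intro i j hA
  have hterm : ∀ p ∈ (Finset.univ : Finset (Fin d)), ∀ q ∈ (Finset.univ : Finset (Fin d)),
      True := fun _ _ _ _ => trivial
  have hnn' : ∀ p ∈ (Finset.univ : Finset (Fin d)),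
      0 ≤ ∑ q, A p q * (v p - v q) ^ 2 :=
    fun p _ => Finset.sum_nonneg fun q _ => mul_nonneg (hnn p q) (sq_nonneg _)
  have hrow : ∑ q, A i q * (v i - v q) ^ 2 = 0 :=
    (Finset.sum_eq_zero_iff_of_nonneg hnn').1 hQ i (Finset.mem_univ i)
  have hij : A i j * (v i - v j) ^ 2 = 0 :=
    (Finset.sum_eq_zero_iff_of_nonneg fun q _ =>
      mul_nonneg (hnn i q) (sq_nonneg _)).1 hrow j (Finset.mem_univ j)
  have := (mul_eq_zero.1 hij).resolve_left hA
  have := pow_eq_zero_iff (n := 2) (by norm_num) |>.1 this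
  linarith [sub_eq_zero.1 this]

lemma reach_const {d : ℕ} {G : SimpleGraph (Fin d)} {v : Fin d → ℝ}
    (h : ∀ a b, G.Adj a b → v a = v b) {i j : Fin d} (hr : G.Reachable i j) : v i = v j := by
  obtain ⟨p⟩ := hr
  induction p with
  | nil => rfl
  | cons ha _ ih => exact (h _ _ ha).trans ih


/-- the Laplacian coefficient built from an orthonormal kernel basis
vanishes within blocks and is large across blocks. -/
theorem stmt_8 {d : ℕ} (hd : 1 ≤ d) (A : Matrix (Fin d) (Fin d) ℝ)
    (hsymm : A.IsSymm) (hdiag : ∀ i, A i i = 0) (hnn : ∀ i j, 0 ≤ A i j)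
    (K : ℕ) (hK : Nat.card (suppGraphM A).ConnectedComponent = K)
    (V : Matrix (Fin d) (Fin K) ℝ)
    (hVorth : Vᵀ * V = 1)
    (hVker : ∀ k, lapM A *ᵥ (fun i => V i k) = 0)
    (hVspan : ∀ v : Fin d → ℝ, lapM A *ᵥ v = 0 →
      ∃ c : Fin K → ℝ, v = ∑ k, c k • fun i => V i k)
    (w : Fin K → ℝ) (hw : ∀ k, 0 ≤ w k) :
    ∀ i j : Fin d, i ≠ j →
      ((suppGraphM A).Reachable i j → ∑ k, w k * (V i k - V j k) ^ 2 = 0) ∧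
      (¬ (suppGraphM A).Reachable i j →
        2 * (⨅ k, w k) / (maxCompCard (suppGraphM A) : ℝ)
          ≤ (⨅ k, w k) * (1 / (compCard (suppGraphM A) i : ℝ)
              + 1 / (compCard (suppGraphM A) j : ℝ)) ∧
        (⨅ k, w k) * (1 / (compCard (suppGraphM A) i : ℝ)
            + 1 / (compCard (suppGraphM A) j : ℝ))
          ≤ ∑ k, w k * (V i k - V j k) ^ 2) := by
  classical
  set G := suppGraphM A with hGdef
  have hAsy : ∀ a b, A b a = A a b := fun a b => congrFun (congrFun hsymm a) b
  have hadjA : ∀ a b, G.Adj a b → A a b ≠ 0 := by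
    intro a b hab
    rw [hGdef, suppGraphM, SimpleGraph.fromRel_adj] at hab
    rcases hab.2 with h | h
    · exact h
    · rw [← hAsy]; exact h
  have hAadj : ∀ a b, A a b ≠ 0 → G.Adj a b := by
    intro a b h
    have hne : a ≠ b := by rintro rfl; exact h (hdiag a)
    rw [hGdef, suppGraphM, SimpleGraph.fromRel_adj]
    exact ⟨hne, Or.inl h⟩
  have hker_reach : ∀ v : Fin d → ℝ, lapM A *ᵥ v = 0 →
      ∀ a b, G.Reachable a b → v a = v b := by
    intro v hv a b hr
    exact reach_const (fun p q hpq => ker_apply_eq A hsymm hnn v hv p q (hadjA p q hpq)) hr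
  intro i j hij
  constructor
  · intro hr
    refine Finset.sum_eq_zero fun k _ => ?_
    have h : V i k = V j k := hker_reach (fun m => V m k) (hVker k) i j hr
    simp [h]
  · intro hnr
    set P : Fin d → Fin d → ℝ := fun a b => ∑ k, V a k * V b k with hPdef
    have horth : ∀ k l, ∑ m, V m k * V m l = if k = l then (1:ℝ) else 0 := by
      intro k l
      have := congrFun (congrFun hVorth k) l
      simpa [Matrix.mul_apply, Matrix.transpose_apply, Matrix.one_apply] using this
    have hrowker : ∀ a, lapM A *ᵥ (fun m => P a m) = 0 := by
      intro a
      funext m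
      have h1 : (lapM A *ᵥ fun m => P a m) m
          = ∑ k, V a k * ((lapM A *ᵥ fun i => V i k) m) := by
        simp only [Matrix.mulVec, dotProduct, hPdef, Finset.mul_sum]
        rw [Finset.sum_comm]
        exact Finset.sum_congr rfl fun k _ => Finset.sum_congr rfl fun n _ => by ring
      rw [h1]
      simp [hVker]
    have hPconst : ∀ a p q, G.Reachable p q → P a p = P a q :=
      fun a p q h => hker_reach (fun m => P a m) (hrowker a) p q h
    have hproj : ∀ v : Fin d → ℝ, lapM A *ᵥ v = 0 → ∀ a, ∑ m, P a m * v m = v a := by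
      intro v hv a
      obtain ⟨c, hc⟩ := hVspan v hv
      have hva : ∀ m, v m = ∑ l, c l * V m l := by
        intro m
        rw [hc]
        simp [Finset.sum_apply]
      have key : ∀ k, ∑ m, V m k * v m = c k := by
        intro k
        calc ∑ m, V m k * v m = ∑ m, ∑ l, c l * (V m k * V m l) := by
              refine Finset.sum_congr rfl fun m _ => ?_
              rw [hva m, Finset.mul_sum]
              exact Finset.sum_congr rfl fun l _ => by ring
          _ = ∑ l, c l * ∑ m, V m k * V m l := by
              rw [Finset.sum_comm]
              exact Finset.sum_congr rfl fun l _ => by rw [Finset.mul_sum]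
          _ = c k := by simp [horth, mul_ite, mul_one, mul_zero]
      calc ∑ m, P a m * v m = ∑ k, V a k * ∑ m, V m k * v m := by
            simp only [hPdef, Finset.sum_mul]
            rw [Finset.sum_comm]
            refine Finset.sum_congr rfl fun k _ => ?_
            rw [Finset.mul_sum]
            exact Finset.sum_congr rfl fun m _ => by ring
        _ = ∑ k, V a k * c k := by simp [key]
        _ = v a := by
            rw [hva a]
            exact Finset.sum_congr rfl fun k _ => by ring
    have hindker : ∀ a, lapM A *ᵥ (fun m => if G.Reachable a m then (1:ℝ) else 0) = 0 := by
      intro a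
      refine ker_of_const A _ fun p q hpq => ?_
      have hr : G.Reachable p q := (hAadj p q hpq).reachable
      by_cases h : G.Reachable a p
      · rw [if_pos h, if_pos (h.trans hr)]
      · rw [if_neg h, if_neg fun h' => h (h'.trans hr.symm)]
    have hcard : ∀ a, ∑ m, (if G.Reachable a m then (1:ℝ) else 0) = (compCard G a : ℝ) := by
      intro a
      have h2 : compCard G a = (Finset.univ.filter fun m => G.Reachable a m).card := by
        rw [compCard, Nat.card_eq_fintype_card, Fintype.card_subtype]
      rw [Finset.sum_boole, h2]
    have hkey : ∀ a b, P a b * (compCard G b : ℝ) = (if G.Reachable b a then (1:ℝ) else 0) := by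
      intro a b
      have h1 : ∑ m, P a m * (if G.Reachable b m then (1:ℝ) else 0)
          = (if G.Reachable b a then (1:ℝ) else 0) :=
        hproj (fun m => if G.Reachable b m then (1:ℝ) else 0) (hindker b) a
      rw [← h1, ← hcard b, Finset.mul_sum]
      refine Finset.sum_congr rfl fun m _ => ?_
      by_cases h : G.Reachable b m
      · rw [hPconst a b m h]
      · simp [h]
    have hcpos : ∀ a, 0 < compCard G a := by
      intro a
      have : Nonempty {m // G.Reachable a m} := ⟨⟨a, SimpleGraph.Reachable.refl a⟩⟩
      rw [compCard]
      exact Nat.card_pos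
    have hci : (0:ℝ) < (compCard G i : ℝ) := by exact_mod_cast hcpos i
    have hcj : (0:ℝ) < (compCard G j : ℝ) := by exact_mod_cast hcpos j
    have hPii : P i i = 1 / (compCard G i : ℝ) := by
      rw [eq_div_iff hci.ne']
      have := hkey i i
      rwa [if_pos (SimpleGraph.Reachable.refl i)] at this
    have hPjj : P j j = 1 / (compCard G j : ℝ) := by
      rw [eq_div_iff hcj.ne']
      have := hkey j j
      rwa [if_pos (SimpleGraph.Reachable.refl j)] at this
    have hPij : P i j = 0 := by
      have h0 := hkey i j
      rw [if_neg (fun h => hnr h.symm)] at h0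
      rcases mul_eq_zero.1 h0 with h | h
      · exact h
      · exact absurd h hcj.ne'
    have hsq : ∑ k, (V i k - V j k) ^ 2
        = 1 / (compCard G i : ℝ) + 1 / (compCard G j : ℝ) := by
      have expand : ∑ k, (V i k - V j k) ^ 2 = P i i - 2 * P i j + P j j := by
        simp only [hPdef, Finset.mul_sum, ← Finset.sum_add_distrib, ← Finset.sum_sub_distrib]
        exact Finset.sum_congr rfl fun k _ => by ring
      rw [expand, hPii, hPij, hPjj]
      ring
    have hwinf0 : 0 ≤ ⨅ k, w k := Real.iInf_nonneg hw
    have hcimax : compCard G i ≤ maxCompCard G := Finset.le_sup (Finset.mem_univ i)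
    have hcjmax : compCard G j ≤ maxCompCard G := Finset.le_sup (Finset.mem_univ j)
    have hM : (0:ℝ) < (maxCompCard G : ℝ) := lt_of_lt_of_le hci (by exact_mod_cast hcimax)
    constructor
    · have h1 : (1:ℝ)/(maxCompCard G : ℝ) ≤ 1/(compCard G i : ℝ) :=
        one_div_le_one_div_of_le hci (by exact_mod_cast hcimax)
      have h2 : (1:ℝ)/(maxCompCard G : ℝ) ≤ 1/(compCard G j : ℝ) :=
        one_div_le_one_div_of_le hcj (by exact_mod_cast hcjmax)
      calc 2 * (⨅ k, w k) / (maxCompCard G : ℝ)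
          = (⨅ k, w k) * (1/(maxCompCard G : ℝ) + 1/(maxCompCard G : ℝ)) := by ring
        _ ≤ (⨅ k, w k) * (1 / (compCard G i : ℝ) + 1 / (compCard G j : ℝ)) :=
            mul_le_mul_of_nonneg_left (add_le_add h1 h2) hwinf0
    · rw [← hsq, Finset.mul_sum]
      refine Finset.sum_le_sum fun k _ => ?_
      exact mul_le_mul_of_nonneg_right (ciInf_le (Finite.bddBelow_range w) k) (sq_nonneg _)

end FCLS
end

section
/- Let ℓ: ℝ^D → ℝ be convex, S ⊆ [D] a set of indices with |S| = s*, and suppose that the restriction of ℓ to the subspace {β : β_{Sᶜ} = 0} is differentiable and μ-strongly convex (μ > 0). Let β̂^orc be the minimizer of ℓ subject to β_{Sᶜ} = 0. Fix a_0, τ, ρ > 0 and a positive integer d*_max. Then: (a) for any weight vector w ∈ ℝ_{≥0}^D with w_{Sᶜ} = 0, ‖w‖_max ≤ 2^5 a_0 τ ρ², ‖w‖_2 ≤ 2^{9/2}√(d*_max)·a_0 τ ρ², and ‖w‖_1 ≤ 2^4 d*_max a_0 τ ρ², any minimizer β of ℓ(β) + ½ Σ_{j∈S} w_j |β_j| subject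 to β_{Sᶜ} = 0 satisfies ‖β − β̂^orc‖_2 ≤ 2^{9/2} a_0 √(d*_max) τ ρ²/μ; and (b) for any w ∈ ℝ_{≥0}^D with w_{Sᶜ} = 0 and ‖w‖_max ≤ 2^5 a_0 τ ρ², any such minimizer satisfies ‖β − β̂^orc‖_2 ≤ 2^5 a_0 √(s*) τ ρ²/μ. -/
open scoped BigOperators
open Matrix

namespace FCLS

set_option maxHeartbeats 1000000 in
/-- weighted-Lasso block-oracle solutions with small weights stay
close to the block oracle when the restricted loss is strongly convex. -/
theorem stmt_12 {D : ℕ} (ℓ : (Fin D → ℝ) → ℝ) (hconv : ConvexOn ℝ Set.univ ℓ)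
    (S : Finset (Fin D)) (sstar : ℕ) (hs : S.card = sstar)
    (μ : ℝ) (hμ : 0 < μ)
    (ι : EuclideanSpace ℝ S → (Fin D → ℝ))
    (hι : ∀ v (j : Fin D), ι v j = if h : j ∈ S then v ⟨j, h⟩ else 0)
    (hdiff : Differentiable ℝ (ℓ ∘ ι))
    (hsc : ∀ u v : EuclideanSpace ℝ S,
      ℓ (ι u) + (inner ℝ (gradient (ℓ ∘ ι) u) (v - u) : ℝ) + (μ / 2) * ‖v - u‖ ^ 2 ≤ ℓ (ι v))
    (a0 τ ρ : ℝ) (ha0 : 0 < a0) (hτ : 0 < τ) (hρ : 0 < ρ)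
    (dmax : ℕ) (hdmax : 0 < dmax)
    (orc : Fin D → ℝ)
    (horc0 : ∀ j ∉ S, orc j = 0)
    (horcmin : ∀ β : Fin D → ℝ, (∀ j ∉ S, β j = 0) → ℓ orc ≤ ℓ β) :
    (∀ w : Fin D → ℝ, (∀ j, 0 ≤ w j) → (∀ j ∉ S, w j = 0) →
      (∀ j, w j ≤ 2 ^ 5 * a0 * τ * ρ ^ 2) →
      l2 w ≤ (2 : ℝ) ^ ((9 : ℝ) / 2) * Real.sqrt dmax * a0 * τ * ρ ^ 2 →
      (∑ j, w j) ≤ 2 ^ 4 * (dmax : ℝ) * a0 * τ * ρ ^ 2 →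
      ∀ β : Fin D → ℝ, (∀ j ∉ S, β j = 0) →
        (∀ γ : Fin D → ℝ, (∀ j ∉ S, γ j = 0) →
          ℓ β + (1 / 2) * ∑ j ∈ S, w j * |β j| ≤ ℓ γ + (1 / 2) * ∑ j ∈ S, w j * |γ j|) →
        l2 (fun j => β j - orc j)
          ≤ (2 : ℝ) ^ ((9 : ℝ) / 2) * a0 * Real.sqrt dmax * τ * ρ ^ 2 / μ) ∧
    (∀ w : Fin D → ℝ, (∀ j, 0 ≤ w j) → (∀ j ∉ S, w j = 0) →
      (∀ j, w j ≤ 2 ^ 5 * a0 * τ * ρ ^ 2) →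
      ∀ β : Fin D → ℝ, (∀ j ∉ S, β j = 0) →
        (∀ γ : Fin D → ℝ, (∀ j ∉ S, γ j = 0) →
          ℓ β + (1 / 2) * ∑ j ∈ S, w j * |β j| ≤ ℓ γ + (1 / 2) * ∑ j ∈ S, w j * |γ j|) →
        l2 (fun j => β j - orc j) ≤ 2 ^ 5 * a0 * Real.sqrt sstar * τ * ρ ^ 2 / μ) := by
  classical
  set uorc : EuclideanSpace ℝ S := WithLp.toLp 2 (fun j => orc j) with huorc
  have hιorc : ι uorc = orc := by
    funext j
    rw [hι]
    by_cases h : j ∈ S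
    · simp [h, huorc]
    · simp [h, horc0 j h]
  have hmin : IsLocalMin (ℓ ∘ ι) uorc :=
    Filter.Eventually.of_forall fun v => by
      have hv : ∀ j ∉ S, ι v j = 0 := fun j hj => by rw [hι]; simp [hj]
      simpa [Function.comp, hιorc] using horcmin (ι v) hv
  have hgrad : gradient (ℓ ∘ ι) uorc = 0 := by
    have h := hmin.fderiv_eq_zero
    simp [gradient, h]
  -- key estimate
  have key : ∀ (w β : Fin D → ℝ), (∀ j, 0 ≤ w j) → (∀ j ∉ S, w j = 0) →
      (∀ j ∉ S, β j = 0) →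
      (∀ γ : Fin D → ℝ, (∀ j ∉ S, γ j = 0) →
        ℓ β + (1 / 2) * ∑ j ∈ S, w j * |β j| ≤ ℓ γ + (1 / 2) * ∑ j ∈ S, w j * |γ j|) →
      μ * l2 (fun j => β j - orc j) ≤ l2 w := by
    intro w β hw0 hwS hβS hβmin
    set ub : EuclideanSpace ℝ S := WithLp.toLp 2 (fun j => β j) with hub
    have hιβ : ι ub = β := by
      funext j
      rw [hι]
      by_cases h : j ∈ S
      · simp [h, hub]
      · simp [h, hβS j h]
    set L := l2 (fun j => β j - orc j) with hLdef
    have hLnonneg : 0 ≤ L := Real.sqrt_nonneg _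
    have hWnonneg : 0 ≤ l2 w := Real.sqrt_nonneg _
    have hsum0 : ∀ (f : Fin D → ℝ), (∀ j ∉ S, f j = 0) →
        ∑ j ∈ S, f j ^ 2 = ∑ j, f j ^ 2 := fun f hf =>
      Finset.sum_subset S.subset_univ (fun j _ hj => by simp [hf j hj])
    have hL2 : L ^ 2 = ∑ j ∈ S, (β j - orc j) ^ 2 := by
      rw [hLdef, l2, Real.sq_sqrt (by positivity)]
      exact (hsum0 _ (fun j hj => by simp [hβS j hj, horc0 j hj])).symm
    have hW2 : l2 w ^ 2 = ∑ j ∈ S, w j ^ 2 := by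
      rw [l2, Real.sq_sqrt (by positivity)]
      exact (hsum0 _ hwS).symm
    have hnorm : ‖ub - uorc‖ ^ 2 = L ^ 2 := by
      rw [EuclideanSpace.norm_eq, Real.sq_sqrt (by positivity), hL2,
        ← Finset.sum_coe_sort S (fun j => (β j - orc j) ^ 2)]
      exact Finset.sum_congr rfl fun j _ => by
        have : (ub - uorc) j = β j - orc j := rfl
        rw [this, Real.norm_eq_abs, sq_abs]
    have hsc' := hsc uorc ub
    rw [hgrad, hιorc, hιβ, inner_zero_left, hnorm] at hsc'
    -- penalized minimality against orc
    have hpen := hβmin orc horc0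
    -- triangle per-coordinate
    have htri : ∑ j ∈ S, w j * |orc j| - ∑ j ∈ S, w j * |β j|
        ≤ ∑ j ∈ S, w j * |β j - orc j| := by
      rw [← Finset.sum_sub_distrib]
      refine Finset.sum_le_sum fun j _ => ?_
      have h1 : |orc j| - |β j| ≤ |β j - orc j| := by
        rw [abs_sub_comm]; exact abs_sub_abs_le_abs_sub _ _
      nlinarith [hw0 j]
    -- Cauchy–Schwarz
    have hCS : ∑ j ∈ S, w j * |β j - orc j| ≤ l2 w * L := by
      have h1 := Finset.sum_mul_sq_le_sq_mul_sq S (fun j => w j) (fun j => |β j - orc j|)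
      have h2 : ∑ j ∈ S, |β j - orc j| ^ 2 = ∑ j ∈ S, (β j - orc j) ^ 2 :=
        Finset.sum_congr rfl fun j _ => sq_abs _
      have hx : 0 ≤ ∑ j ∈ S, w j * |β j - orc j| :=
        Finset.sum_nonneg fun j _ => mul_nonneg (hw0 j) (abs_nonneg _)
      have h3 : (∑ j ∈ S, w j * |β j - orc j|) ^ 2 ≤ (l2 w * L) ^ 2 := by
        rw [mul_pow, hW2, hL2]
        calc (∑ j ∈ S, w j * |β j - orc j|) ^ 2
            ≤ (∑ j ∈ S, w j ^ 2) * (∑ j ∈ S, |β j - orc j| ^ 2) := h1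
          _ = (∑ j ∈ S, w j ^ 2) * (∑ j ∈ S, (β j - orc j) ^ 2) := by rw [h2]
      nlinarith [mul_nonneg hWnonneg hLnonneg]
    have hmain : μ * L ^ 2 ≤ l2 w * L := by nlinarith
    rcases eq_or_lt_of_le hLnonneg with h0 | hpos
    · rw [← h0]; simpa using hWnonneg
    · exact le_of_mul_le_mul_right (by nlinarith) hpos
  constructor
  · intro w hw0 hwS hwmax hwl2 hwl1 β hβS hβmin
    have hk := key w β hw0 hwS hβS hβmin
    rw [le_div_iff₀ hμ]
    calc l2 (fun j => β j - orc j) * μ = μ * l2 (fun j => β j - orc j) := mul_comm _ _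
      _ ≤ l2 w := hk
      _ ≤ (2 : ℝ) ^ ((9 : ℝ) / 2) * Real.sqrt dmax * a0 * τ * ρ ^ 2 := hwl2
      _ = (2 : ℝ) ^ ((9 : ℝ) / 2) * a0 * Real.sqrt dmax * τ * ρ ^ 2 := by ring
  · intro w hw0 hwS hwmax β hβS hβmin
    have hk := key w β hw0 hwS hβS hβmin
    have hB : (0 : ℝ) ≤ 2 ^ 5 * a0 * τ * ρ ^ 2 := by positivity
    have hW : l2 w ≤ Real.sqrt sstar * (2 ^ 5 * a0 * τ * ρ ^ 2) := by
      have h1 : ∑ j, w j ^ 2 ≤ (sstar : ℝ) * (2 ^ 5 * a0 * τ * ρ ^ 2) ^ 2 := by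
        calc ∑ j, w j ^ 2 = ∑ j ∈ S, w j ^ 2 :=
              (Finset.sum_subset S.subset_univ (fun j _ hj => by simp [hwS j hj])).symm
          _ ≤ ∑ j ∈ S, (2 ^ 5 * a0 * τ * ρ ^ 2) ^ 2 :=
              Finset.sum_le_sum fun j _ => by nlinarith [hw0 j, hwmax j]
          _ = (sstar : ℝ) * (2 ^ 5 * a0 * τ * ρ ^ 2) ^ 2 := by
              rw [Finset.sum_const, hs, nsmul_eq_mul]
      calc l2 w = Real.sqrt (∑ j, w j ^ 2) := rfl
        _ ≤ Real.sqrt ((sstar : ℝ) * (2 ^ 5 * a0 * τ * ρ ^ 2) ^ 2) := Real.sqrt_le_sqrt h1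
        _ = Real.sqrt sstar * (2 ^ 5 * a0 * τ * ρ ^ 2) := by
            rw [Real.sqrt_mul (Nat.cast_nonneg _), Real.sqrt_sq hB]
    rw [le_div_iff₀ hμ]
    calc l2 (fun j => β j - orc j) * μ = μ * l2 (fun j => β j - orc j) := mul_comm _ _
      _ ≤ l2 w := hk
      _ ≤ Real.sqrt sstar * (2 ^ 5 * a0 * τ * ρ ^ 2) := hW
      _ = 2 ^ 5 * a0 * Real.sqrt sstar * τ * ρ ^ 2 := by ring

end FCLS
end

section
/- There exists an absolute constant C > 0 such that the following holds. Let x be a real-valued random variable with mean μ = 𝔼[x] such that x − μ is σ-sub-Gaussian, i.e., P(|x − μ| ≥ t) ≤ 2exp(−t²/(2σ²)) for all t > 0. Then |x| − |μ| is σ-sub-Gaussian in the same sense, i.e., P(||x| − |μ|| ≥ t) ≤ 2exp(−t²/(2σ²)) for all t > 0, and 𝔼[|x| − |μ|] ≤ C(σ + |μ|)·exp(−μ²/(4σ²)). -/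
open scoped BigOperators
open Matrix

namespace FCLS

section Aux13
open MeasureTheory Real Set

-- pointwise key inequality
lemma aux_claim (σ a u : ℝ) (hσ : 0 < σ) (ha : 0 ≤ a) (hua : a ≤ u) :
    u ≤ (a + 2*σ) * Real.exp ((u^2 - a^2)/(4*σ^2)) := by
  have hE : 1 + (u^2 - a^2)/(4*σ^2) ≤ Real.exp ((u^2 - a^2)/(4*σ^2)) := by
    have := Real.add_one_le_exp ((u^2 - a^2)/(4*σ^2)); linarith
  have h4 : (0:ℝ) < 4*σ^2 := by positivity
  have key : 4*σ^2*u ≤ (a + 2*σ) * (4*σ^2 + (u^2 - a^2)) := by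
    nlinarith [sq_nonneg (u - σ), sq_nonneg (u - a), mul_nonneg ha (sub_nonneg.2 hua),
      mul_pos hσ hσ, mul_nonneg (mul_nonneg ha ha) (sub_nonneg.2 hua),
      mul_nonneg ha (mul_pos hσ hσ).le, sq_nonneg (u - a - 2*σ)]
  have h1 : u ≤ (a + 2*σ) * (1 + (u^2 - a^2)/(4*σ^2)) := by
    rw [← sub_nonneg] at key ⊢
    have : (a + 2*σ) * (1 + (u^2 - a^2)/(4*σ^2)) - u
        = ((a + 2*σ) * (4*σ^2 + (u^2 - a^2)) - 4*σ^2*u) / (4*σ^2) := by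
      field_simp
    rw [this]; positivity
  refine h1.trans (mul_le_mul_of_nonneg_left hE (by linarith))

lemma aux_pointwise (σ m y s : ℝ) (hσ : 0 < σ) (hs : |m| = s * m) (hs1 : s = 1 ∨ s = -1) :
    max (-(s * y)) 0 ≤ (|m| + 2*σ) * Real.exp (-m^2/(4*σ^2)) * Real.exp ((y - m)^2/(4*σ^2)) := by
  have hrhs : 0 ≤ (|m| + 2*σ) * Real.exp (-m^2/(4*σ^2)) * Real.exp ((y - m)^2/(4*σ^2)) := by
    positivity
  rcases le_or_gt (-(s*y)) 0 with h | h
  · exact le_trans (max_le h le_rfl) hrhs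
  · rw [max_eq_left h.le]
    have hsy : s * y ≤ 0 := by linarith
    have habs : |s| = 1 := by rcases hs1 with h1 | h1 <;> simp [h1]
    set u := |y - m| with hu
    have hu1 : u = |m| - s*y := by
      have : u = |s*(y-m)| := by rw [abs_mul, habs, one_mul]
      rw [this]
      have : s*(y-m) = s*y - |m| := by rw [hs]; ring
      rw [this, abs_sub_comm, abs_of_nonneg (by linarith [abs_nonneg m])]
    have hum : |m| ≤ u := by linarith
    have hle : -(s*y) ≤ u := by linarith [abs_nonneg m]
    have hclaim := aux_claim σ |m| u hσ (abs_nonneg m) hum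
    have hexp : Real.exp ((u^2 - |m|^2)/(4*σ^2))
        = Real.exp (-m^2/(4*σ^2)) * Real.exp ((y - m)^2/(4*σ^2)) := by
      rw [← Real.exp_add, sq_abs, sq_abs]
      congr 1; ring
    calc -(s*y) ≤ u := hle
      _ ≤ (|m| + 2*σ) * Real.exp ((u^2 - |m|^2)/(4*σ^2)) := hclaim
      _ = _ := by rw [hexp, mul_assoc]


lemma aux_mgf {Ω : Type} [MeasurableSpace Ω] (μ : Measure Ω) [IsProbabilityMeasure μ]
    (y : Ω → ℝ) (σ : ℝ) (hσ : 0 < σ) (hy : AEMeasurable y μ)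
    (htail : ∀ t : ℝ, 0 < t →
      μ {ω | t ≤ |y ω|} ≤ ENNReal.ofReal (2 * Real.exp (-t^2/(2*σ^2)))) :
    ∫⁻ ω, ENNReal.ofReal (Real.exp ((y ω)^2/(4*σ^2))) ∂μ ≤ ENNReal.ofReal 13 := by
  set g : ℝ → ℝ := fun t => t/(2*σ^2) * Real.exp (t^2/(4*σ^2)) with hg
  have gcont : Continuous g := by fun_prop
  have g_intble : ∀ t > (0:ℝ), IntervalIntegrable g volume 0 t :=
    fun t _ => gcont.intervalIntegrable 0 t
  have g_nn : ∀ᵐ t ∂(volume.restrict (Ioi (0:ℝ))), 0 ≤ g t := by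
    filter_upwards [ae_restrict_mem measurableSet_Ioi] with t ht
    have : (0:ℝ) < t := ht
    positivity
  have hFTC : ∀ u : ℝ, ∫ t in (0:ℝ)..u, g t = Real.exp (u^2/(4*σ^2)) - 1 := by
    intro u
    have hderiv : ∀ t ∈ Set.uIcc (0:ℝ) u,
        HasDerivAt (fun v => Real.exp (v^2/(4*σ^2))) (g t) t := by
      intro t _
      have h1 : HasDerivAt (fun v : ℝ => v^2/(4*σ^2)) (2*t/(4*σ^2)) t := by
        simpa using (hasDerivAt_pow 2 t).div_const (4*σ^2)
      have h2 := h1.exp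
      convert h2 using 1
      rw [hg]; field_simp; ring
    rw [intervalIntegral.integral_eq_sub_of_hasDerivAt hderiv (gcont.intervalIntegrable 0 u)]
    simp
  have hlc := lintegral_comp_eq_lintegral_meas_le_mul μ (f := fun ω => |y ω|) (g := g)
    (Filter.Eventually.of_forall fun ω => abs_nonneg _) (continuous_abs.measurable.comp_aemeasurable hy) g_intble g_nn
  -- bound the RHS of the layercake identity
  have hbound : (∫⁻ t in Ioi (0:ℝ), μ {a | t ≤ |y a|} * ENNReal.ofReal (g t))
      ≤ ENNReal.ofReal 12 := by
    have step1 : (∫⁻ t in Ioi (0:ℝ), μ {a | t ≤ |y a|} * ENNReal.ofReal (g t))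
        ≤ ∫⁻ t in Ioi (0:ℝ), ENNReal.ofReal (2/σ * Real.exp (-(1/(8*σ^2)) * t^2)) := by
      apply setLIntegral_mono (by fun_prop) -- measurability of upper function
      intro t ht
      have ht : (0:ℝ) < t := ht
      have hgt : 0 ≤ g t := by rw [hg]; positivity
      calc μ {a | t ≤ |y a|} * ENNReal.ofReal (g t)
          ≤ ENNReal.ofReal (2 * Real.exp (-t^2/(2*σ^2))) * ENNReal.ofReal (g t) :=
            mul_le_mul_left (htail t ht) _
        _ = ENNReal.ofReal (2 * Real.exp (-t^2/(2*σ^2)) * g t) :=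
            (ENNReal.ofReal_mul (by positivity)).symm
        _ ≤ ENNReal.ofReal (2/σ * Real.exp (-(1/(8*σ^2)) * t^2)) := by
            apply ENNReal.ofReal_le_ofReal
            have hexp : Real.exp (-t^2/(2*σ^2)) * Real.exp (t^2/(4*σ^2))
                = Real.exp (-(1/(8*σ^2))*t^2) * Real.exp (-(1/(8*σ^2))*t^2) := by
              rw [← Real.exp_add, ← Real.exp_add]; congr 1; field_simp; ring
            have h1 : t * Real.exp (-(1/(8*σ^2))*t^2) ≤ 2*σ := by
              rw [show -(1/(8*σ^2))*t^2 = -(t^2/(8*σ^2)) by field_simp, Real.exp_neg,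
                mul_inv_le_iff₀' (Real.exp_pos _)]
              have h3 := Real.add_one_le_exp (t^2/(8*σ^2))
              have h5 : t ≤ t^2/(4*σ) + 2*σ := by
                rw [← sub_nonneg, show t^2/(4*σ) + 2*σ - t = (t^2 - 4*σ*t + 8*σ^2)/(4*σ) from by
                  field_simp; ring]
                exact div_nonneg (by nlinarith [sq_nonneg (t - 2*σ)]) (by positivity)
              have h6 : (t^2/(8*σ^2) + 1)*(2*σ) = t^2/(4*σ) + 2*σ := by field_simp; ring
              nlinarith [mul_le_mul_of_nonneg_right h3 (by positivity : (0:ℝ) ≤ 2*σ)]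
            have hL : 2 * Real.exp (-t^2/(2*σ^2)) * g t
                = (t * Real.exp (-(1/(8*σ^2))*t^2)) * (Real.exp (-(1/(8*σ^2))*t^2) / σ^2) := by
              rw [hg]
              rw [show 2 * Real.exp (-t^2/(2*σ^2)) * (t/(2*σ^2) * Real.exp (t^2/(4*σ^2)))
                = (t/σ^2) * (Real.exp (-t^2/(2*σ^2)) * Real.exp (t^2/(4*σ^2))) from by ring, hexp]
              ring
            rw [hL]
            have h2 : (t * Real.exp (-(1/(8*σ^2))*t^2)) * (Real.exp (-(1/(8*σ^2))*t^2) / σ^2)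
                ≤ (2*σ) * (Real.exp (-(1/(8*σ^2))*t^2) / σ^2) :=
              mul_le_mul_of_nonneg_right h1 (by positivity)
            refine h2.trans (le_of_eq ?_)
            field_simp
    refine step1.trans ?_
    have hb : (0:ℝ) < 1/(8*σ^2) := by positivity
    have hint8 : Integrable (fun t : ℝ => 2/σ * Real.exp (-(1/(8*σ^2)) * t^2)) :=
      (integrable_exp_neg_mul_sq hb).const_mul _
    calc (∫⁻ t in Ioi (0:ℝ), ENNReal.ofReal (2/σ * Real.exp (-(1/(8*σ^2)) * t^2)))
        ≤ ∫⁻ t : ℝ, ENNReal.ofReal (2/σ * Real.exp (-(1/(8*σ^2)) * t^2)) :=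
          setLIntegral_le_lintegral _ _
      _ = ENNReal.ofReal (∫ t : ℝ, 2/σ * Real.exp (-(1/(8*σ^2)) * t^2)) :=
          (ofReal_integral_eq_lintegral_ofReal hint8
            (Filter.Eventually.of_forall fun t => by positivity)).symm
      _ ≤ ENNReal.ofReal 12 := by
          apply ENNReal.ofReal_le_ofReal
          rw [MeasureTheory.integral_const_mul, integral_gaussian]
          have hsq : Real.sqrt (π / (1/(8*σ^2))) ≤ 6*σ := by
            rw [show (6*σ : ℝ) = Real.sqrt ((6*σ)^2) from (Real.sqrt_sq (by positivity)).symm]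
            apply Real.sqrt_le_sqrt
            rw [div_div_eq_mul_div, div_one]
            nlinarith [Real.pi_le_four, sq_nonneg σ]
          calc 2/σ * Real.sqrt (π / (1/(8*σ^2))) ≤ 2/σ * (6*σ) :=
                mul_le_mul_of_nonneg_left hsq (by positivity)
            _ = 12 := by field_simp; ring
  -- pointwise domination of exp by the layercake integrand + 1
  have hpt : ∀ ω, ENNReal.ofReal (Real.exp ((y ω)^2/(4*σ^2)))
      ≤ ENNReal.ofReal (∫ t in (0:ℝ)..|y ω|, g t) + 1 := by
    intro ω
    rw [hFTC, show ((|y ω|)^2 : ℝ) = (y ω)^2 from sq_abs _]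
    calc ENNReal.ofReal (Real.exp ((y ω)^2/(4*σ^2)))
        = ENNReal.ofReal ((Real.exp ((y ω)^2/(4*σ^2)) - 1) + 1) := by ring_nf
      _ ≤ ENNReal.ofReal (Real.exp ((y ω)^2/(4*σ^2)) - 1) + ENNReal.ofReal 1 :=
          ENNReal.ofReal_add_le
      _ = ENNReal.ofReal (Real.exp ((y ω)^2/(4*σ^2)) - 1) + 1 := by rw [ENNReal.ofReal_one]
  calc (∫⁻ ω, ENNReal.ofReal (Real.exp ((y ω)^2/(4*σ^2))) ∂μ)
      ≤ ∫⁻ ω, (ENNReal.ofReal (∫ t in (0:ℝ)..|y ω|, g t) + 1) ∂μ := lintegral_mono hpt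
    _ = (∫⁻ ω, ENNReal.ofReal (∫ t in (0:ℝ)..|y ω|, g t) ∂μ) + 1 := by
        rw [lintegral_add_right _ measurable_const, lintegral_one, measure_univ]
    _ ≤ ENNReal.ofReal 12 + 1 := by rw [hlc]; exact add_le_add_left hbound 1
    _ = ENNReal.ofReal 13 := by
        rw [← ENNReal.ofReal_one, ← ENNReal.ofReal_add (by norm_num) (by norm_num)]
        norm_num


end Aux13

open MeasureTheory in
/-- sub-Gaussianity of `|x| − |𝔼x|` and the improved bound on its mean. -/
theorem stmt_13 : ∃ C : ℝ, 0 < C ∧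
    ∀ (Ω : Type) [MeasurableSpace Ω] (μ : Measure Ω), IsProbabilityMeasure μ →
    ∀ (x : Ω → ℝ) (σ : ℝ), 0 < σ → Integrable x μ →
    ∀ m : ℝ, m = ∫ ω, x ω ∂μ →
    (∀ t : ℝ, 0 < t →
      μ {ω | t ≤ |x ω - m|} ≤ ENNReal.ofReal (2 * Real.exp (-t ^ 2 / (2 * σ ^ 2)))) →
    (∀ t : ℝ, 0 < t →
      μ {ω | t ≤ abs (|x ω| - |m|)} ≤ ENNReal.ofReal (2 * Real.exp (-t ^ 2 / (2 * σ ^ 2)))) ∧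
    (∫ ω, (|x ω| - |m|) ∂μ) ≤ C * (σ + |m|) * Real.exp (-m ^ 2 / (4 * σ ^ 2)) := by
  refine ⟨100, by norm_num, ?_⟩
  intro Ω _ μ hprob x σ hσ hint m hm htail
  haveI := hprob
  constructor
  · intro t ht
    refine le_trans (measure_mono ?_) (htail t ht)
    intro ω hω
    simp only [Set.mem_setOf_eq] at hω ⊢
    exact le_trans hω (abs_abs_sub_abs_le_abs_sub _ _)
  · set s : ℝ := if m < 0 then -1 else 1 with hs_def
    have hs1 : s = 1 ∨ s = -1 := by by_cases h : m < 0 <;> simp [hs_def, h]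
    have hs : |m| = s * m := by
      rcases lt_or_ge m 0 with h | h
      · rw [abs_of_neg h, hs_def, if_pos h]; ring
      · rw [abs_of_nonneg h, hs_def, if_neg (not_lt.2 h)]; ring
    have habs : |s| = 1 := by rcases hs1 with h1 | h1 <;> simp [h1]
    have habs_max : ∀ ω : Ω, |x ω| - |m| = s*(x ω - m) + 2 * max (-(s * x ω)) 0 := by
      intro ω
      have habs_s : |x ω| = |s * x ω| := by rw [abs_mul, habs, one_mul]
      rcases le_or_gt 0 (s * x ω) with hx | hx
      · rw [habs_s, abs_of_nonneg hx, max_eq_right (by linarith), hs]; ring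
      · rw [habs_s, abs_of_neg hx, max_eq_left (by linarith), hs]; ring
    have hxm : Integrable (fun ω => x ω - m) μ := hint.sub (integrable_const m)
    have hint1 : Integrable (fun ω => s*(x ω - m)) μ := hxm.const_mul s
    have hint2 : Integrable (fun ω => max (-(s * x ω)) 0) μ :=
      ((hint.const_mul s).neg).pos_part
    have hsplit : ∫ ω, (|x ω| - |m|) ∂μ
        = (∫ ω, s*(x ω - m) ∂μ) + 2 * ∫ ω, max (-(s * x ω)) 0 ∂μ := by
      rw [← MeasureTheory.integral_const_mul, ← integral_add hint1 (hint2.const_mul 2)]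
      exact integral_congr_ae (Filter.Eventually.of_forall fun ω => habs_max ω)
    have h1 : ∫ ω, s*(x ω - m) ∂μ = 0 := by
      rw [MeasureTheory.integral_const_mul, integral_sub hint (integrable_const m), integral_const,
        probReal_univ]
      simp [← hm]
    have hmgf : ∫⁻ ω, ENNReal.ofReal (Real.exp ((x ω - m)^2/(4*σ^2))) ∂μ
        ≤ ENNReal.ofReal 13 :=
      aux_mgf μ (fun ω => x ω - m) σ hσ hxm.aemeasurable (fun t ht => htail t ht)
    set K := (|m| + 2*σ) * Real.exp (-m^2/(4*σ^2)) with hK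
    have hK0 : 0 ≤ K := by positivity
    have hspec : ∫ ω, max (-(s * x ω)) 0 ∂μ ≤ K * 13 := by
      have heq : ∫ ω, max (-(s * x ω)) 0 ∂μ
          = (∫⁻ ω, ENNReal.ofReal (max (-(s * x ω)) 0) ∂μ).toReal :=
        integral_eq_lintegral_of_nonneg_ae
          (Filter.Eventually.of_forall fun ω => le_max_right _ _) hint2.aestronglyMeasurable
      rw [heq]
      have hb1 : (∫⁻ ω, ENNReal.ofReal (max (-(s * x ω)) 0) ∂μ)
          ≤ ENNReal.ofReal K * ENNReal.ofReal 13 := by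
        calc ∫⁻ ω, ENNReal.ofReal (max (-(s * x ω)) 0) ∂μ
            ≤ ∫⁻ ω, ENNReal.ofReal K * ENNReal.ofReal (Real.exp ((x ω - m)^2/(4*σ^2))) ∂μ := by
              apply lintegral_mono
              intro ω
              dsimp only
              rw [← ENNReal.ofReal_mul hK0]
              refine ENNReal.ofReal_le_ofReal ?_
              have h := aux_pointwise σ m (x ω) s hσ hs hs1
              rw [hK]; exact h
          _ = ENNReal.ofReal K * ∫⁻ ω, ENNReal.ofReal (Real.exp ((x ω - m)^2/(4*σ^2))) ∂μ :=
              lintegral_const_mul' _ _ ENNReal.ofReal_ne_top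
          _ ≤ ENNReal.ofReal K * ENNReal.ofReal 13 := mul_le_mul_right hmgf _
      calc (∫⁻ ω, ENNReal.ofReal (max (-(s * x ω)) 0) ∂μ).toReal
          ≤ (ENNReal.ofReal K * ENNReal.ofReal 13).toReal :=
            ENNReal.toReal_mono (ENNReal.mul_ne_top ENNReal.ofReal_ne_top
              ENNReal.ofReal_ne_top) hb1
        _ = K * 13 := by
            rw [← ENNReal.ofReal_mul hK0, ENNReal.toReal_ofReal (by positivity)]
    rw [hsplit, h1, zero_add]
    have h2 : 2 * ∫ ω, max (-(s * x ω)) 0 ∂μ ≤ 2 * (K * 13) := by linarith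
    refine h2.trans ?_
    rw [hK]
    have hexp_pos : 0 < Real.exp (-m^2/(4*σ^2)) := Real.exp_pos _
    have hmn : (0:ℝ) ≤ |m| := abs_nonneg m
    have goal_eq : Real.exp (-m ^ 2 / (4 * σ ^ 2)) = Real.exp (-m^2/(4*σ^2)) := rfl
    nlinarith [mul_pos hσ hexp_pos, mul_nonneg hmn hexp_pos.le]

end FCLS
end
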